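/- arXiv:1206.1152 — 3 statements merged into one kernel-verified Lean document; each statement's English description precedes it below -/
import Mathlib

section
/- Let p be a prime and let the weights be n_i = p^{e_i} for i = 1,…,s with e_i ∈ ℕ, and set e := max(e_1,…,e_s). Then exp(2π√(−1)/p^e) is an eigenvalue of Φ_{[n_1,…,n_s]} (i.e. a root of χ_{[n_1,…,n_s]} in ℂ) if and only if it is not the case that p^e = 2 and s is even. -/
open Matrix Polynomial

/-- The Coxeter matrix `Φ_[n]` of the linearly oriented quiver of type `A_{n-1}`:
the `(n-1) × (n-1)` integer matrix whose `(i,j)`-entry is `1` if `j = i + 1`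
(for rows other than the last), whose last row has all entries `-1`, and whose
other entries are `0`. -/
def PhiA (n : ℕ) : Matrix (Fin (n - 1)) (Fin (n - 1)) ℤ :=
  fun i j =>
    if (i : ℕ) = n - 2 then -1
    else if (j : ℕ) = (i : ℕ) + 1 then 1 else 0

/-- The Kronecker (tensor) product `Φ_{[n_1,…,n_s]} = Φ_{[n_1]} ⊗ ⋯ ⊗ Φ_{[n_s]}`,
realized on the index type `Π i, Fin (n i - 1)`. -/
def PhiProd {s : ℕ} (n : Fin s → ℕ) :
    Matrix ((i : Fin s) → Fin (n i - 1)) ((i : Fin s) → Fin (n i - 1)) ℤ :=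
  fun x y => ∏ i, PhiA (n i) (x i) (y i)

/-- The characteristic polynomial `χ_{[n_1,…,n_s]} ∈ ℤ[X]` of `Φ_{[n_1,…,n_s]}`. -/
noncomputable def Chi {s : ℕ} (n : Fin s → ℕ) : Polynomial ℤ :=
  (PhiProd n).charpoly

/-- The standard primitive complex `m`-th root of unity `exp(2π√-1/m)`. -/
noncomputable def zeta (m : ℕ) : ℂ := Complex.exp (2 * Real.pi * Complex.I / m)

/- ### Auxiliary lemmas -/

/-- The vector `k ↦ μ^k` is an eigenvector of `Φ_[n]` with eigenvalue `μ`,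
for any `n`-th root of unity `μ ≠ 1` (row-sum formulation). -/
lemma phiA_row_sum (n : ℕ) (hn : 2 ≤ n) {μ : ℂ} (h1 : μ ^ n = 1) (hne : μ ≠ 1)
    (i : Fin (n - 1)) :
    ∑ k : Fin (n - 1), ((PhiA n i k : ℤ) : ℂ) * μ ^ (k : ℕ) = μ * μ ^ (i : ℕ) := by
  have hsum : ∑ k ∈ Finset.range n, μ ^ k = 0 := by
    have h := geom_sum_mul μ n
    rw [h1, sub_self] at h
    rcases mul_eq_zero.mp h with h' | h'
    · exact h'
    · exact absurd (sub_eq_zero.mp h') hne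
  by_cases h : (i : ℕ) = n - 2
  · have hs1 : ∑ k ∈ Finset.range (n - 1), μ ^ k = -μ ^ (n - 1) := by
      have h2 : ∑ k ∈ Finset.range (n - 1), μ ^ k + μ ^ (n - 1) = 0 := by
        rw [← Finset.sum_range_succ]
        have hn1 : n - 1 + 1 = n := by omega
        rw [hn1]; exact hsum
      linear_combination h2
    have hent : ∀ k : Fin (n - 1), ((PhiA n i k : ℤ) : ℂ) = -1 := by
      intro k; simp [PhiA, h]
    calc ∑ k : Fin (n - 1), ((PhiA n i k : ℤ) : ℂ) * μ ^ (k : ℕ)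
        = ∑ k : Fin (n - 1), (-1) * μ ^ (k : ℕ) := by
          refine Finset.sum_congr rfl fun k _ => by rw [hent k]
      _ = -(∑ k : Fin (n - 1), μ ^ (k : ℕ)) := by
          rw [← Finset.sum_neg_distrib]; refine Finset.sum_congr rfl fun k _ => by ring
      _ = -(∑ k ∈ Finset.range (n - 1), μ ^ k) := by
          rw [Fin.sum_univ_eq_sum_range (fun k => μ ^ k) (n - 1)]
      _ = μ ^ (n - 1) := by rw [hs1]; ring
      _ = μ * μ ^ (i : ℕ) := by
          rw [h, show n - 1 = (n - 2) + 1 by omega, pow_succ]; ring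
  · have hlt : (i : ℕ) + 1 < n - 1 := by
      have := i.isLt; omega
    set k0 : Fin (n - 1) := ⟨(i : ℕ) + 1, hlt⟩ with hk0
    rw [Finset.sum_eq_single k0]
    · have : ((PhiA n i k0 : ℤ) : ℂ) = 1 := by
        simp [PhiA, h, hk0]
      rw [this, one_mul, hk0]
      simp [pow_succ]; ring
    · intro b _ hbne
      have hb : (b : ℕ) ≠ (i : ℕ) + 1 := by
        intro hb'; exact hbne (Fin.ext (by simp [hk0, hb']))
      simp [PhiA, h, hb]
    · intro habs; exact absurd (Finset.mem_univ k0) habs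

/-- Evaluating the characteristic polynomial at a scalar gives a determinant. -/
lemma eval_charpoly_det {ι : Type*} [Fintype ι] [DecidableEq ι]
    (M : Matrix ι ι ℂ) (t : ℂ) :
    M.charpoly.eval t = (Matrix.diagonal (fun _ => t) - M).det := by
  rw [Matrix.charpoly, ← Polynomial.coe_evalRingHom, RingHom.map_det]
  congr 1
  ext i j
  by_cases h : i = j <;>
    simp [h, Matrix.charmatrix_apply, Matrix.diagonal_apply, Matrix.sub_apply]

/-- If each `μ i` is an `n i`-th root of unity different from `1`, then
`∏ i, μ i` is a root of the (complexified) characteristic polynomial of the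
Kronecker product. -/
lemma prod_isRoot {s : ℕ} (n : Fin s → ℕ) (hn : ∀ i, 2 ≤ n i)
    (μ : Fin s → ℂ) (h1 : ∀ i, μ i ^ n i = 1) (hne : ∀ i, μ i ≠ 1) :
    ((Chi n).map (Int.castRingHom ℂ)).IsRoot (∏ i, μ i) := by
  classical
  have hchar : (Chi n).map (Int.castRingHom ℂ)
      = ((PhiProd n).map (Int.castRingHom ℂ)).charpoly := by
    rw [Chi, ← Matrix.charpoly_map]
  set M := (PhiProd n).map (Int.castRingHom ℂ) with hM
  rw [Polynomial.IsRoot, hchar, eval_charpoly_det,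
    ← Matrix.exists_mulVec_eq_zero_iff]
  set v : ((i : Fin s) → Fin (n i - 1)) → ℂ := fun x => ∏ i, μ i ^ (x i : ℕ) with hv
  refine ⟨v, ?_, ?_⟩
  · intro h0
    have hx : ∀ i, (0 : ℕ) < n i - 1 := fun i => by have := hn i; omega
    have h00 := congr_fun h0 (fun i => ⟨0, hx i⟩)
    simp [hv] at h00
  · have key : ∀ x, M.mulVec v x = (∏ i, μ i) * v x := by
      intro x
      have : M.mulVec v x
          = ∑ y : (i : Fin s) → Fin (n i - 1),
              ∏ i, (((PhiA (n i) (x i) (y i) : ℤ) : ℂ) * μ i ^ ((y i : ℕ))) := by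
        refine Finset.sum_congr rfl fun y _ => ?_
        show ((∏ i, PhiA (n i) (x i) (y i) : ℤ) : ℂ) * (∏ i, μ i ^ ((y i : ℕ))) = _
        push_cast
        rw [← Finset.prod_mul_distrib]
      rw [this, ← Fintype.prod_sum (fun i k => ((PhiA (n i) (x i) k : ℤ) : ℂ) * μ i ^ (k : ℕ))]
      calc ∏ i, ∑ k : Fin (n i - 1), ((PhiA (n i) (x i) k : ℤ) : ℂ) * μ i ^ (k : ℕ)
          = ∏ i, (μ i * μ i ^ ((x i : ℕ))) := by
            refine Finset.prod_congr rfl fun i _ =>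
              phiA_row_sum (n i) (hn i) (h1 i) (hne i) (x i)
        _ = (∏ i, μ i) * v x := by rw [Finset.prod_mul_distrib, hv]
    ext x
    simp only [Matrix.sub_mulVec, Pi.sub_apply, Pi.zero_apply, sub_eq_zero,
      Matrix.mulVec_diagonal, key x]

/-- The arithmetic heart: construction of suitable exponents. -/
lemma arith_exists (p : ℕ) (hp : p.Prime) {s : ℕ} (hs : 0 < s)
    (e : Fin s → ℕ) (he : ∀ i, 0 < e i)
    (h : ¬ (p ^ (Finset.univ.sup e) = 2 ∧ Even s)) :
    ∃ a : Fin s → ℕ, (∀ i, ¬ p ^ (e i) ∣ a i) ∧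
      (∑ i, a i * p ^ (Finset.univ.sup e - e i)) ≡ 1 [MOD p ^ (Finset.univ.sup e)] := by
  classical
  haveI : Nonempty (Fin s) := ⟨⟨0, hs⟩⟩
  set E := Finset.univ.sup e with hEdef
  set N := p ^ E with hNdef
  have hle : ∀ i, e i ≤ E := fun i => Finset.le_sup (Finset.mem_univ i)
  obtain ⟨i0, -, hi0⟩ := Finset.exists_mem_eq_sup Finset.univ Finset.univ_nonempty e
  have hp2 : 2 ≤ p := hp.two_le
  have hEe : E = e i0 := by rw [hEdef]; exact hi0
  have hE1 : 1 ≤ E := by have := he i0; omega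
  have hN2 : 2 ≤ N := le_trans hp2 (Nat.le_self_pow (by omega) p)
  by_cases hcase : N = 2
  · -- the degenerate case : everything is 2, s is odd
    have hodds : Odd s := by
      rcases Nat.even_or_odd s with hev | hod
      · exact absurd ⟨hcase, hev⟩ h
      · exact hod
    have hpeq : p = 2 :=
      (Nat.prime_dvd_prime_iff_eq hp Nat.prime_two).mp
        (hcase ▸ (hNdef ▸ dvd_pow_self p (by omega)))
    have h2' : p ^ E = 2 := by rw [← hNdef]; exact hcase
    have hEeq : E = 1 := by
      have hpow : p ^ E = p ^ 1 := by rw [pow_one]; omega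
      exact Nat.pow_right_injective hp2 hpow
    have hei : ∀ i, e i = 1 := fun i => le_antisymm (hEeq ▸ hle i) (he i)
    refine ⟨fun _ => 1, fun i => ?_, ?_⟩
    · show ¬ p ^ e i ∣ 1
      rw [hei i, pow_one, hpeq]; omega
    · have hterm : ∀ i : Fin s, (1 : ℕ) * p ^ (E - e i) = 1 := by
        intro i; rw [hei i, hEeq]; simp
      rw [Finset.sum_congr rfl (fun i _ => hterm i), Finset.sum_const,
        Finset.card_univ, Fintype.card_fin, smul_eq_mul, mul_one]
      show s % N = 1 % N
      rw [hcase, Nat.odd_iff.mp hodds]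
  · -- main case : N > 2
    have hN3 : 3 ≤ N := by omega
    haveI : NeZero N := ⟨by omega⟩
    haveI : Fact (1 < N) := ⟨by omega⟩
    set w : Fin s → ℕ := fun j => p ^ (E - e j) with hw
    set t := Finset.univ.erase i0 with ht
    have claim : ∃ b : Fin s → ℕ, (∀ j, j ≠ i0 → ¬ p ^ (e j) ∣ b j) ∧
        (((∑ j ∈ t, b j * w j : ℕ) : ZMod N) ≠ 1) := by
      by_cases hT : (((∑ j ∈ t, 1 * w j : ℕ) : ZMod N) ≠ 1)
      · refine ⟨fun _ => 1, fun j _ => ?_, hT⟩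
        show ¬ p ^ (e j) ∣ 1
        have h2 : 2 ≤ p ^ (e j) :=
          le_trans hp2 (Nat.le_self_pow (by have := he j; omega) p)
        intro hdvd
        have := Nat.le_of_dvd one_pos hdvd
        omega
      · push_neg at hT
        have hj1 : ∃ j1, j1 ≠ i0 ∧ 2 < p ^ (e j1) := by
          by_contra hc
          push_neg at hc
          -- t is nonempty
          have htne : t.Nonempty := by
            by_contra hemp
            rw [Finset.not_nonempty_iff_eq_empty] at hemp
            rw [hemp, Finset.sum_empty] at hT
            simp at hT
          obtain ⟨j', hj'⟩ := htne
          have hj'ne : j' ≠ i0 := Finset.ne_of_mem_erase hj'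
          have hall : ∀ j, j ≠ i0 → p ^ (e j) = 2 := by
            intro j hj
            have h2 : 2 ≤ p ^ (e j) :=
              le_trans hp2 (Nat.le_self_pow (by have := he j; omega) p)
            have := hc j hj
            omega
          have hpeq : p = 2 := by
            have hd : p ∣ p ^ (e j') := dvd_pow_self p (by have := he j'; omega)
            rw [hall j' hj'ne] at hd
            exact (Nat.prime_dvd_prime_iff_eq hp Nat.prime_two).mp hd
          have hE2 : 2 ≤ E := by
            by_contra hE2'
            have : E = 1 := by omega
            rw [hNdef, this, pow_one, hpeq] at hcase
            exact hcase rfl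
          -- every term in the sum is even
          have h2T : 2 ∣ ∑ j ∈ t, 1 * w j := by
            refine Finset.dvd_sum fun j hj => ?_
            rw [one_mul]
            show 2 ∣ p ^ (E - e j)
            have hj'' : e j = 1 := by
              have hthis := hall j (Finset.ne_of_mem_erase hj)
              rw [hpeq] at hthis
              have h2e : (2 : ℕ) ^ e j = 2 ^ 1 := by rw [pow_one]; exact hthis
              exact Nat.pow_right_injective (le_refl 2) h2e
            rw [hpeq, hj'']
            exact dvd_pow_self 2 (by omega)
          have h2N : 2 ∣ N := by
            rw [hNdef, hpeq]; exact dvd_pow_self 2 (by omega)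
          -- but hT says sum ≡ 1 mod N, so the sum is odd
          have hmod : (∑ j ∈ t, 1 * w j) % N = 1 := by
            have := (ZMod.natCast_eq_natCast_iff (∑ j ∈ t, 1 * w j) 1 N).mp
              (by rw [Nat.cast_one]; exact hT)
            rw [Nat.ModEq] at this
            rw [this, Nat.mod_eq_of_lt (by omega)]
          have hdam := Nat.div_add_mod (∑ j ∈ t, 1 * w j) N
          rw [hmod] at hdam
          have hodd : ¬ (2 ∣ ∑ j ∈ t, 1 * w j) := by
            rw [← hdam]
            intro hdd
            have heven : 2 ∣ N * ((∑ j ∈ t, 1 * w j) / N) :=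
              Dvd.dvd.mul_right h2N _
            omega
          exact hodd h2T
        obtain ⟨j1, hj1ne, hj1gt⟩ := hj1
        have hj1t : j1 ∈ t := Finset.mem_erase.mpr ⟨hj1ne, Finset.mem_univ _⟩
        set b : Fin s → ℕ := Function.update (fun _ => 1) j1 2 with hb
        have hbj1 : b j1 = 2 := by rw [hb, Function.update_self]
        have hbother : ∀ j, j ≠ j1 → b j = 1 := fun j hj => by
          rw [hb, Function.update_of_ne hj]
        refine ⟨b, ?_, ?_⟩
        · intro j hj
          by_cases hjj : j = j1
          · subst hjj
            rw [hbj1]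
            intro hdvd
            have := Nat.le_of_dvd (by omega) hdvd
            omega
          · rw [hbother j hjj]
            have h2 : 2 ≤ p ^ (e j) :=
              le_trans hp2 (Nat.le_self_pow (by have := he j; omega) p)
            intro hdvd
            have := Nat.le_of_dvd one_pos hdvd
            omega
        · have hsum' : ∑ j ∈ t, b j * w j = w j1 + ∑ j ∈ t, 1 * w j := by
            rw [← Finset.add_sum_erase t (fun j => b j * w j) hj1t,
              ← Finset.add_sum_erase t (fun j => 1 * w j) hj1t]
            have herase : ∑ j ∈ t.erase j1, b j * w j
                = ∑ j ∈ t.erase j1, 1 * w j := by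
              refine Finset.sum_congr rfl fun j hj => ?_
              rw [hbother j (Finset.ne_of_mem_erase hj)]
            rw [hbj1, herase]
            ring
          rw [hsum', Nat.cast_add, hT]
          intro heq
          have hw0 : ((w j1 : ℕ) : ZMod N) = 0 := by
            have h01 : ((w j1 : ℕ) : ZMod N) + 1 = 0 + 1 := by
              rw [heq, zero_add]
            exact add_right_cancel h01
          have hdvd : N ∣ w j1 := (ZMod.natCast_eq_zero_iff _ _).mp hw0
          have hwpos : 0 < w j1 := by
            rw [hw]; exact Nat.pow_pos (by omega)
          have hwlt : w j1 < N := by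
            rw [hw, hNdef]
            exact Nat.pow_lt_pow_right (by omega) (by have := he j1; have := hle j1; omega)
          have := Nat.le_of_dvd hwpos hdvd
          omega
    obtain ⟨b, hbdvd, hbs⟩ := claim
    set T := ∑ j ∈ t, b j * w j with hT'
    set c := ((1 : ZMod N) - (T : ZMod N)).val with hc
    have hcN : c < N := ZMod.val_lt _
    have hcne : c ≠ 0 := by
      rw [hc]
      intro h0
      have : (1 : ZMod N) - (T : ZMod N) = 0 := (ZMod.val_eq_zero _).mp h0
      have : (1 : ZMod N) = (T : ZMod N) := by
        have := sub_eq_zero.mp this; exact this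
      exact hbs this.symm
    have hccast : ((c : ℕ) : ZMod N) = 1 - (T : ZMod N) :=
      ZMod.natCast_rightInverse _
    refine ⟨Function.update b i0 c, ?_, ?_⟩
    · intro i
      by_cases hii : i = i0
      · subst hii
        rw [Function.update_self]
        have hpe : p ^ (e i) = N := by rw [hNdef, hEdef, hi0]
        rw [hpe]
        intro hdvd
        have := Nat.le_of_dvd (Nat.pos_of_ne_zero hcne) hdvd
        omega
      · rw [Function.update_of_ne hii]
        exact hbdvd i hii
    · have hsplit : (∑ i, Function.update b i0 c i * p ^ (E - e i))
          = c * w i0 + ∑ j ∈ t, b j * w j := by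
        rw [← Finset.add_sum_erase Finset.univ
          (fun i => Function.update b i0 c i * p ^ (E - e i)) (Finset.mem_univ i0)]
        congr 1
        · rw [Function.update_self]
        · refine Finset.sum_congr rfl fun j hj => ?_
          rw [Function.update_of_ne (Finset.ne_of_mem_erase hj)]
      have hwi0 : w i0 = 1 := by
        show p ^ (E - e i0) = 1
        have h0 : E - e i0 = 0 := by omega
        rw [h0, pow_zero]
      rw [hsplit, hwi0, mul_one, ← hT']
      rw [← ZMod.natCast_eq_natCast_iff]
      push_cast
      rw [hccast]
      ring

theorem zeta_max_isRoot_iff (p : ℕ) (hp : p.Prime) {s : ℕ} (hs : 0 < s)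
    (e : Fin s → ℕ) (he : ∀ i, 0 < e i) :
    ((Chi (fun i => p ^ e i)).map (Int.castRingHom ℂ)).IsRoot
        (zeta (p ^ (Finset.univ.sup e)))
      ↔ ¬ (p ^ (Finset.univ.sup e) = 2 ∧ Even s) := by
  classical
  set E := Finset.univ.sup e with hEdef
  have hle : ∀ i, e i ≤ E := fun i => Finset.le_sup (Finset.mem_univ i)
  have hp2 : 2 ≤ p := hp.two_le
  have hE1 : 1 ≤ E := le_trans (he ⟨0, hs⟩) (hle ⟨0, hs⟩)
  have hN0 : p ^ E ≠ 0 := by positivity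
  have hN2 : 2 ≤ p ^ E := le_trans hp2 (Nat.le_self_pow (by omega) p)
  have hprim : IsPrimitiveRoot (zeta (p ^ E)) (p ^ E) := by
    rw [zeta]
    exact Complex.isPrimitiveRoot_exp _ hN0
  constructor
  · rintro hroot ⟨h2, hsev⟩
    have hpeq : p = 2 :=
      (Nat.prime_dvd_prime_iff_eq hp Nat.prime_two).mp
        (h2 ▸ dvd_pow_self p (by omega))
    have hEeq : E = 1 := by
      have hpow : p ^ E = p ^ 1 := by rw [pow_one]; omega
      exact Nat.pow_right_injective hp2 hpow
    have hei : ∀ i, e i = 1 := fun i => le_antisymm (hEeq ▸ hle i) (he i)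
    have hni : ∀ i : Fin s, p ^ e i = 2 := fun i => by rw [hei i, pow_one, hpeq]
    have hzeta : zeta (p ^ E) = -1 := by
      rw [h2, zeta]
      rw [show ((2 : ℕ) : ℂ) = 2 by norm_num,
        show (2 * (Real.pi : ℂ) * Complex.I / 2) = Real.pi * Complex.I by ring]
      exact Complex.exp_pi_mul_I
    haveI : Unique ((i : Fin s) → Fin (p ^ e i - 1)) := by
      have hpos : ∀ i : Fin s, 0 < p ^ e i - 1 := fun i => by
        have := hni i; omega
      refine ⟨⟨fun i => ⟨0, hpos i⟩⟩, ?_⟩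
      intro x
      funext i
      apply Fin.ext
      have h1 := (x i).isLt
      have hn := hni i
      show (x i : ℕ) = 0
      omega
    set M := (PhiProd (fun i => p ^ e i)).map (Int.castRingHom ℂ) with hM
    have hchar : (Chi (fun i => p ^ e i)).map (Int.castRingHom ℂ) = M.charpoly := by
      rw [Chi, ← Matrix.charpoly_map]
    rw [Polynomial.IsRoot, hchar, eval_charpoly_det, Matrix.det_unique] at hroot
    have hentry : M default default = 1 := by
      rw [hM, Matrix.map_apply]
      have hPP : PhiProd (fun i => p ^ e i) default default = 1 := by
        show (∏ i, PhiA (p ^ e i)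
          ((default : (i : Fin s) → Fin (p ^ e i - 1)) i)
          ((default : (i : Fin s) → Fin (p ^ e i - 1)) i)) = 1
        have hfac : ∀ i : Fin s, PhiA (p ^ e i)
            ((default : (i : Fin s) → Fin (p ^ e i - 1)) i)
            ((default : (i : Fin s) → Fin (p ^ e i - 1)) i) = -1 := by
          intro i
          have hlt := ((default : (i : Fin s) → Fin (p ^ e i - 1)) i).isLt
          have hn := hni i
          simp only [PhiA]
          rw [if_pos (by omega)]
        rw [Finset.prod_congr rfl (fun i _ => hfac i), Finset.prod_const,
          Finset.card_univ, Fintype.card_fin]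
        exact Even.neg_one_pow hsev
      rw [hPP]
      norm_num
    rw [Matrix.sub_apply, Matrix.diagonal_apply_eq, hentry, hzeta] at hroot
    norm_num at hroot
  · intro hnot
    obtain ⟨a, ha, hsum⟩ := arith_exists p hp hs e he hnot
    set ζ := zeta (p ^ E) with hζ
    set μ : Fin s → ℂ := fun i => ζ ^ (a i * p ^ (E - e i)) with hμ
    have hζN : ζ ^ (p ^ E) = 1 := hprim.pow_eq_one
    have hprod : (∏ i, μ i) = ζ := by
      rw [hμ]
      rw [Finset.prod_pow_eq_pow_sum]
      rw [pow_eq_pow_mod _ hζN]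
      have h1m : (1 : ℕ) % (p ^ E) = 1 := Nat.mod_eq_of_lt (by omega)
      rw [show (∑ i, a i * p ^ (E - e i)) % p ^ E = 1 from by
        have := hsum
        rw [Nat.ModEq] at this
        rw [this, h1m]]
      rw [pow_one]
    rw [← hprod]
    refine prod_isRoot _ ?_ μ ?_ ?_
    · intro i
      exact le_trans hp2 (Nat.le_self_pow (by have := he i; omega) p)
    · intro i
      rw [hμ, ← pow_mul]
      refine (hprim.pow_eq_one_iff_dvd _).mpr ?_
      refine ⟨a i, ?_⟩
      rw [mul_assoc, ← pow_add]
      rw [show E - e i + e i = E from by have := hle i; omega]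
      ring
    · intro i heq
      rw [hμ] at heq
      have hdvd : p ^ E ∣ a i * p ^ (E - e i) :=
        (hprim.pow_eq_one_iff_dvd _).mp heq
      apply ha i
      have hsplitN : p ^ E = p ^ (e i) * p ^ (E - e i) := by
        rw [← pow_add]
        congr 1
        have := hle i; omega
      rw [hsplitN] at hdvd
      have hq : (p ^ (E - e i) : ℕ) ≠ 0 := by positivity
      exact (mul_dvd_mul_iff_right hq).mp hdvd
end

section
/- (Theorem 4.3) Let [n_1,…,n_s] be a multiset of integers ≥ 2 containing the element 2 at most once. Then 1 is NOT an eigenvalue of Φ_{[n_1,…,n_s]} (equivalently, (X−1) does not divide χ_{[n_1,…,n_s]}) if and only if either (i) there exists an index i such that gcd(n_i, n_{i'}) = 1 for all i' ≠ i (i.e. the gcd graph has an isolated vertex), or (ii) lcm(n_1,…,n_s) is even and, writing E := {i : n_i is even}, the cardinality |E| is odd and at least 3, for every i ∈ E and every odd prime p dividing n_i there is no index i' ≠ i with p dividing n_{i'}, and at most one index i ∈ E has 2-adic valuation v_2(n_i) > 1. -/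
open Matrix Polynomial

section PD

lemma zeta_isPrimitiveRoot {n : ℕ} (hn : n ≠ 0) : IsPrimitiveRoot (zeta n) n :=
  Complex.isPrimitiveRoot_exp n hn

/-- The eigenvalue `ζ_n^(j+1)` of `PhiA n`. -/
noncomputable def lam (n : ℕ) (j : Fin (n - 1)) : ℂ := zeta n ^ ((j : ℕ) + 1)

lemma lam_pow_n {n : ℕ} (hn : 2 ≤ n) (j : Fin (n - 1)) : lam n j ^ n = 1 := by
  rw [lam, ← pow_mul, mul_comm, pow_mul, (zeta_isPrimitiveRoot (by omega)).pow_eq_one, one_pow]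

lemma lam_ne_one {n : ℕ} (hn : 2 ≤ n) (j : Fin (n - 1)) : lam n j ≠ 1 := by
  intro h
  have hj := j.isLt
  have := (zeta_isPrimitiveRoot (n := n) (by omega)).pow_inj
    (i := (j : ℕ) + 1) (j := 0) (by omega) (by omega) (by simpa [lam] using h)
  omega

lemma lam_injective {n : ℕ} (hn : 2 ≤ n) : Function.Injective (lam n) := by
  intro a b hab
  have := (zeta_isPrimitiveRoot (n := n) (by omega)).pow_inj
    (i := (a : ℕ) + 1) (j := (b : ℕ) + 1) (by have := a.isLt; omega) (by have := b.isLt; omega) hab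
  exact Fin.ext (by omega)

/-- Sum of all powers `lam^k`, `k < n-1`, equals `-lam^(n-1)`. -/
lemma lam_geom {n : ℕ} (hn : 2 ≤ n) (j : Fin (n - 1)) :
    ∑ k ∈ Finset.range (n - 1), lam n j ^ k = - lam n j ^ (n - 1) := by
  have h0 : ∑ k ∈ Finset.range n, lam n j ^ k = 0 := by
    have := geom_sum_eq (lam_ne_one hn j) n
    rw [this, lam_pow_n hn j, sub_self, zero_div]
  have h1 : ∑ k ∈ Finset.range n, lam n j ^ k
      = (∑ k ∈ Finset.range (n - 1), lam n j ^ k) + lam n j ^ (n - 1) := by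
    have h2 : ∑ k ∈ Finset.range n, lam n j ^ k
        = ∑ k ∈ Finset.range ((n - 1) + 1), lam n j ^ k := by
      rw [Nat.sub_add_cancel (by omega : 1 ≤ n)]
    rw [h2, Finset.sum_range_succ]
  rw [h1] at h0
  linear_combination h0
end PD

section PD2
variable {n : ℕ}

/-- Eigenvector (Vandermonde) matrix for `PhiA n`. -/
noncomputable def Pmat (n : ℕ) : Matrix (Fin (n - 1)) (Fin (n - 1)) ℂ :=
  fun i j => lam n j ^ (i : ℕ)

noncomputable def Dmat (n : ℕ) : Matrix (Fin (n - 1)) (Fin (n - 1)) ℂ :=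
  Matrix.diagonal (lam n)

lemma phiA_mul_Pmat (hn : 2 ≤ n) :
    (PhiA n).map (Int.cast : ℤ → ℂ) * Pmat n = Pmat n * Dmat n := by
  funext i j
  rw [Matrix.mul_apply, Matrix.mul_apply]
  have hrhs : ∑ k, Pmat n i k * Dmat n k j = lam n j ^ ((i : ℕ) + 1) := by
    rw [Finset.sum_eq_single j]
    · simp [Pmat, Dmat, Matrix.diagonal_apply_eq, pow_succ]
    · intro k _ hk
      rw [Dmat, Matrix.diagonal_apply_ne _ hk, mul_zero]
    · simp
  rw [hrhs]
  by_cases hi : (i : ℕ) = n - 2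
  · -- last row
    have : ∑ k, ((PhiA n).map (Int.cast : ℤ → ℂ)) i k * Pmat n k j
        = ∑ k : Fin (n-1), -(lam n j ^ (k : ℕ)) := by
      apply Finset.sum_congr rfl
      intro k _
      simp [PhiA, Pmat, Matrix.map_apply, hi]
    rw [this, Finset.sum_neg_distrib, Fin.sum_univ_eq_sum_range (fun k => lam n j ^ k),
      lam_geom hn j, neg_neg]
    congr 1
    omega
  · -- other rows
    have hlt : (i : ℕ) + 1 < n - 1 := by have := i.isLt; omega
    rw [Finset.sum_eq_single (⟨(i : ℕ) + 1, hlt⟩ : Fin (n - 1))]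
    · simp [PhiA, Pmat, Matrix.map_apply, hi, pow_succ, mul_comm]
    · intro k _ hk
      have : ¬ ((k : ℕ) = (i : ℕ) + 1) := by
        intro hc; exact hk (Fin.ext hc)
      simp [PhiA, Matrix.map_apply, hi, this]
    · simp
end PD2

section PD3
variable {n : ℕ}

lemma det_Pmat_ne_zero (hn : 2 ≤ n) : (Pmat n).det ≠ 0 := by
  have : Pmat n = (Matrix.vandermonde (lam n)).transpose := by
    funext i j
    simp [Pmat, Matrix.vandermonde, Matrix.transpose_apply]
  rw [this, Matrix.det_transpose, Matrix.det_vandermonde]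
  apply Finset.prod_ne_zero_iff.mpr
  intro i _
  apply Finset.prod_ne_zero_iff.mpr
  intro j hj
  have hij : i ≠ j := by
    intro h; subst h; exact absurd (Finset.mem_Ioi.mp hj) (lt_irrefl _)
  exact sub_ne_zero.mpr fun h => hij (lam_injective hn h.symm)

lemma Pmat_isUnit_det (hn : 2 ≤ n) : IsUnit (Pmat n).det :=
  isUnit_iff_ne_zero.mpr (det_Pmat_ne_zero hn)

lemma phiA_eq_conj (hn : 2 ≤ n) :
    (PhiA n).map (Int.cast : ℤ → ℂ) = Pmat n * Dmat n * (Pmat n)⁻¹ := by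
  have h1 := Matrix.mul_nonsing_inv (Pmat n) (Pmat_isUnit_det hn)
  calc (PhiA n).map (Int.cast : ℤ → ℂ)
      = (PhiA n).map (Int.cast : ℤ → ℂ) * (Pmat n * (Pmat n)⁻¹) := by rw [h1, mul_one]
    _ = ((PhiA n).map (Int.cast : ℤ → ℂ) * Pmat n) * (Pmat n)⁻¹ := by rw [mul_assoc]
    _ = Pmat n * Dmat n * (Pmat n)⁻¹ := by rw [phiA_mul_Pmat hn]
end PD3

section Tensor
variable {s : ℕ} {m : Fin s → ℕ}
def tens (A : (i : Fin s) → Matrix (Fin (m i)) (Fin (m i)) ℂ) :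
    Matrix ((i : Fin s) → Fin (m i)) ((i : Fin s) → Fin (m i)) ℂ :=
  fun x y => ∏ i, A i (x i) (y i)

lemma tens_mul (A B : (i : Fin s) → Matrix (Fin (m i)) (Fin (m i)) ℂ) :
    tens A * tens B = tens (fun i => A i * B i) := by
  funext x y
  simp only [tens, Matrix.mul_apply]
  rw [Finset.prod_univ_sum (fun i => (Finset.univ : Finset (Fin (m i))))
    (fun i j => A i (x i) j * B i j (y i))]
  rw [Fintype.piFinset_univ]
  congr 1
  funext z
  rw [Finset.prod_mul_distrib]

lemma tens_one : tens (fun i => (1 : Matrix (Fin (m i)) (Fin (m i)) ℂ)) = 1 := by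
  funext x y
  simp only [tens, Matrix.one_apply]
  by_cases h : x = y
  · subst h; simp
  · rw [if_neg h]
    obtain ⟨i, hi⟩ := Function.ne_iff.mp h
    exact Finset.prod_eq_zero (Finset.mem_univ i) (by simp [Matrix.one_apply, hi])

lemma tens_diagonal (d : (i : Fin s) → Fin (m i) → ℂ) :
    tens (fun i => Matrix.diagonal (d i)) = Matrix.diagonal (fun x => ∏ i, d i (x i)) := by
  funext x y
  by_cases h : x = y
  · subst h; simp [tens, Matrix.diagonal_apply_eq]
  · rw [tens, Matrix.diagonal_apply_ne _ h]
    obtain ⟨i, hi⟩ := Function.ne_iff.mp h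
    exact Finset.prod_eq_zero (Finset.mem_univ i) (Matrix.diagonal_apply_ne _ hi)
end Tensor

section Reduction
variable {s : ℕ} (n : Fin s → ℕ)

lemma chi_eval_one : (Chi n).eval 1 = ((1 : Matrix _ _ ℤ) - PhiProd n).det := by
  rw [Chi, Matrix.charpoly]
  rw [show (Polynomial.eval 1 : Polynomial ℤ → ℤ) = Polynomial.evalRingHom 1 from rfl]
  rw [RingHom.map_det]
  congr 1
  funext i j
  simp only [RingHom.mapMatrix_apply, Matrix.map_apply, Matrix.charmatrix_apply,
    Matrix.sub_apply, Matrix.diagonal_apply, Matrix.one_apply]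
  by_cases h : i = j <;> simp [h]

lemma chi_isRoot_iff (hn : ∀ i, 2 ≤ n i) :
    (Chi n).IsRoot 1 ↔
      ∃ x : (i : Fin s) → Fin (n i - 1), ∏ i, lam (n i) (x i) = 1 := by
  rw [Polynomial.IsRoot, chi_eval_one]
  have hdet : ((((1 : Matrix _ _ ℤ) - PhiProd n).map (Int.cast : ℤ → ℂ)).det)
      = ((((1 : Matrix _ _ ℤ) - PhiProd n).det : ℤ) : ℂ) := by
    rw [show ((1 - PhiProd n).map (Int.cast : ℤ → ℂ))
      = (Int.castRingHom ℂ).mapMatrix (1 - PhiProd n) from rfl, ← RingHom.map_det]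
    rfl
  have hcast : ((1 : Matrix _ _ ℤ) - PhiProd n).det = 0 ↔
      ((((1 : Matrix _ _ ℤ) - PhiProd n).map (Int.cast : ℤ → ℂ)).det = 0) := by
    rw [hdet]
    exact_mod_cast Iff.rfl
  rw [hcast]
  have hmap : ((1 : Matrix _ _ ℤ) - PhiProd n).map (Int.cast : ℤ → ℂ)
      = 1 - tens (fun i => (PhiA (n i)).map (Int.cast : ℤ → ℂ)) := by
    funext x y
    simp only [Matrix.map_apply, Matrix.sub_apply, tens, PhiProd, Matrix.one_apply]
    push_cast
    by_cases h : x = y <;> simp [h]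
  rw [hmap]
  have hfun : (fun i => (PhiA (n i)).map (Int.cast : ℤ → ℂ))
      = fun i => (Pmat (n i) * Dmat (n i)) * (Pmat (n i))⁻¹ :=
    funext fun i => phiA_eq_conj (hn i)
  have hconj : tens (fun i => (PhiA (n i)).map (Int.cast : ℤ → ℂ))
      = tens (fun i => Pmat (n i)) * tens (fun i => Dmat (n i))
        * tens (fun i => (Pmat (n i))⁻¹) := by
    rw [hfun, ← tens_mul (fun i => Pmat (n i) * Dmat (n i)) (fun i => (Pmat (n i))⁻¹)]
    rw [tens_mul (fun i => Pmat (n i)) (fun i => Dmat (n i))]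
  have hPQ : tens (fun i => Pmat (n i)) * tens (fun i => (Pmat (n i))⁻¹) = 1 := by
    rw [tens_mul]
    rw [show (fun i => Pmat (n i) * (Pmat (n i))⁻¹)
      = fun i => (1 : Matrix (Fin (n i - 1)) (Fin (n i - 1)) ℂ) from
      funext fun i => Matrix.mul_nonsing_inv _ (Pmat_isUnit_det (hn i))]
    exact tens_one
  have key : (1 : Matrix _ _ ℂ) - tens (fun i => (PhiA (n i)).map (Int.cast : ℤ → ℂ))
      = tens (fun i => Pmat (n i))
        * ((1 : Matrix _ _ ℂ) - tens (fun i => Dmat (n i)))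
        * tens (fun i => (Pmat (n i))⁻¹) := by
    rw [hconj, Matrix.mul_sub, Matrix.sub_mul, Matrix.mul_one, hPQ]
  rw [key, Matrix.det_mul, Matrix.det_mul]
  have hdetPQ : (tens (fun i => Pmat (n i))).det * (tens (fun i => (Pmat (n i))⁻¹)).det = 1 := by
    rw [← Matrix.det_mul, hPQ, Matrix.det_one]
  have : (tens fun i => Pmat (n i)).det *
      ((1 : Matrix _ _ ℂ) - tens fun i => Dmat (n i)).det *
      (tens fun i => (Pmat (n i))⁻¹).det
      = ((1 : Matrix _ _ ℂ) - tens fun i => Dmat (n i)).det := by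
    rw [mul_right_comm, hdetPQ, one_mul]
  rw [this]
  have hdiag : (1 : Matrix _ _ ℂ) - tens (fun i => Dmat (n i))
      = Matrix.diagonal (fun x : (i : Fin s) → Fin (n i - 1) => 1 - ∏ i, lam (n i) (x i)) := by
    rw [show (fun i => Dmat (n i)) = fun i => Matrix.diagonal (lam (n i)) from rfl, tens_diagonal]
    rw [← Matrix.diagonal_one, Matrix.diagonal_sub]
  rw [hdiag, Matrix.det_diagonal]
  rw [Finset.prod_eq_zero_iff]
  constructor
  · rintro ⟨x, _, hx⟩
    exact ⟨x, by linear_combination -hx⟩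
  · rintro ⟨x, hx⟩
    exact ⟨x, Finset.mem_univ x, by rw [hx, sub_self]⟩
end Reduction

section Part2
variable {s : ℕ} (n : Fin s → ℕ)

lemma zeta_pow (m k : ℕ) : zeta m ^ k = Complex.exp (k * (2 * Real.pi * Complex.I / m)) := by
  rw [zeta, ← Complex.exp_nat_mul]

lemma prod_lam_eq_one_iff (hn : ∀ i, 2 ≤ n i) (x : (i : Fin s) → Fin (n i - 1)) :
    (∏ i, lam (n i) (x i)) = 1 ↔
      ∃ m : ℤ, (∑ i, (((x i : ℕ) + 1 : ℚ)) / ((n i : ℚ))) = (m : ℚ) := by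
  have h1 : (∏ i, lam (n i) (x i))
      = Complex.exp (∑ i, (((x i : ℕ) + 1 : ℂ)) * (2 * Real.pi * Complex.I / (n i))) := by
    rw [Complex.exp_sum]
    apply Finset.prod_congr rfl
    intro i _
    rw [lam, zeta_pow]
    push_cast
    ring_nf
  rw [h1, Complex.exp_eq_one_iff]
  have h2 : ∀ m : ℤ, (∑ i, (((x i : ℕ) + 1 : ℂ)) * (2 * Real.pi * Complex.I / (n i)))
      = m * (2 * Real.pi * Complex.I)
      ↔ ((∑ i, (((x i : ℕ) + 1 : ℚ)) / ((n i : ℚ)) : ℚ) : ℂ) = (m : ℂ) := by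
    intro m
    have hsum : (∑ i, (((x i : ℕ) + 1 : ℂ)) * (2 * Real.pi * Complex.I / (n i)))
        = ((∑ i, (((x i : ℕ) + 1 : ℚ)) / ((n i : ℚ)) : ℚ) : ℂ) * (2 * Real.pi * Complex.I) := by
      push_cast
      rw [Finset.sum_mul]
      apply Finset.sum_congr rfl
      intro i _
      have : ((n i : ℂ)) ≠ 0 := by
        simp only [ne_eq, Nat.cast_eq_zero]
        have := hn i; omega
      field_simp
    rw [hsum]
    constructor
    · intro h
      exact mul_right_cancel₀ (by simp [Real.pi_ne_zero, Complex.I_ne_zero]) h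
    · intro h; rw [h]
  constructor
  · rintro ⟨m, hm⟩
    exact ⟨m, by exact_mod_cast (h2 m).mp hm⟩
  · rintro ⟨m, hm⟩
    exact ⟨m, (h2 m).mpr (by exact_mod_cast hm)⟩

lemma chi_root_iff_sol (hn : ∀ i, 2 ≤ n i) :
    (Chi n).IsRoot 1 ↔ ∃ k : Fin s → ℕ, (∀ i, 1 ≤ k i ∧ k i ≤ n i - 1) ∧
      ∃ m : ℤ, (∑ i, ((k i : ℚ)) / ((n i : ℚ))) = (m : ℚ) := by
  rw [chi_isRoot_iff n hn]
  constructor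
  · rintro ⟨x, hx⟩
    obtain ⟨m, hm⟩ := (prod_lam_eq_one_iff n hn x).mp hx
    refine ⟨fun i => (x i : ℕ) + 1, fun i => ⟨by show 1 ≤ (x i : ℕ) + 1; omega,
      by show (x i : ℕ) + 1 ≤ n i - 1; have := (x i).isLt; omega⟩, m, ?_⟩
    rw [← hm]
    apply Finset.sum_congr rfl
    intro i _
    push_cast
    ring
  · rintro ⟨k, hk, m, hm⟩
    have hx : ∀ i, k i - 1 < n i - 1 := fun i => by have := (hk i); omega
    refine ⟨fun i => ⟨k i - 1, hx i⟩, (prod_lam_eq_one_iff n hn _).mpr ⟨m, ?_⟩⟩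
    rw [← hm]
    apply Finset.sum_congr rfl
    intro i _
    have h1 := (hk i).1
    have : (k i - 1 : ℕ) + 1 = k i := by omega
    rw [show ((⟨k i - 1, hx i⟩ : Fin (n i - 1)) : ℕ) = k i - 1 from rfl]
    congr 1
    exact_mod_cast congrArg (Nat.cast : ℕ → ℚ) this
end Part2


section RatAPI

def IsInt (q : ℚ) : Prop := ∃ z : ℤ, q = (z : ℚ)

lemma IsInt.add {a b : ℚ} (ha : IsInt a) (hb : IsInt b) : IsInt (a + b) := by
  obtain ⟨x, rfl⟩ := ha; obtain ⟨y, rfl⟩ := hb; exact ⟨x + y, by push_cast; ring⟩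

lemma IsInt.sub {a b : ℚ} (ha : IsInt a) (hb : IsInt b) : IsInt (a - b) := by
  obtain ⟨x, rfl⟩ := ha; obtain ⟨y, rfl⟩ := hb; exact ⟨x - y, by push_cast; ring⟩

lemma IsInt.mul {a b : ℚ} (ha : IsInt a) (hb : IsInt b) : IsInt (a * b) := by
  obtain ⟨x, rfl⟩ := ha; obtain ⟨y, rfl⟩ := hb; exact ⟨x * y, by push_cast; ring⟩

lemma isInt_intCast (z : ℤ) : IsInt (z : ℚ) := ⟨z, rfl⟩
lemma isInt_natCast (z : ℕ) : IsInt (z : ℚ) := ⟨z, by push_cast; ring⟩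

lemma IsInt.sum {α : Type*} {t : Finset α} {f : α → ℚ} (h : ∀ a ∈ t, IsInt (f a)) :
    IsInt (∑ a ∈ t, f a) := by
  classical
  induction t using Finset.induction_on with
  | empty => exact ⟨0, by simp⟩
  | @insert _ _ hx ih =>
    rw [Finset.sum_insert hx]
    exact (h _ (Finset.mem_insert_self _ _)).add
      (ih fun a ha => h a (Finset.mem_insert_of_mem ha))

lemma isInt_div_iff (a b : ℕ) (hb : b ≠ 0) : IsInt ((a : ℚ) / (b : ℚ)) ↔ b ∣ a := by
  constructor
  · rintro ⟨z, hz⟩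
    have hb' : (b : ℚ) ≠ 0 := Nat.cast_ne_zero.mpr hb
    have : (a : ℚ) = (z * b : ℤ) := by
      push_cast
      field_simp at hz
      linarith [hz]
    have : (a : ℤ) = z * b := by exact_mod_cast this
    have : (b : ℤ) ∣ (a : ℤ) := ⟨z, by linarith⟩
    exact_mod_cast this
  · rintro ⟨c, rfl⟩
    have hb' : (b : ℚ) ≠ 0 := Nat.cast_ne_zero.mpr hb
    exact ⟨c, by push_cast; field_simp⟩

lemma cast_mul_div_of_dvd (C a b : ℕ) (hb : b ≠ 0) (h : b ∣ C) :
    (C : ℚ) * ((a : ℚ) / (b : ℚ)) = ((C / b * a : ℕ) : ℚ) := by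
  obtain ⟨c, rfl⟩ := h
  have hb' : (b : ℚ) ≠ 0 := Nat.cast_ne_zero.mpr hb
  rw [Nat.mul_div_cancel_left c (by omega : 0 < b)]
  push_cast
  field_simp

end RatAPI

section Extract
variable {s : ℕ}

lemma extract (n k : Fin s → ℕ) (hn : ∀ i, 2 ≤ n i) (m : ℤ)
    (hsum : (∑ i, ((k i : ℚ)) / ((n i : ℚ))) = (m : ℚ))
    (i : Fin s) (C : ℕ) (hC : ∀ j, j ≠ i → n j ∣ C) :
    n i ∣ C * k i := by
  have hterm : ∀ j ∈ Finset.univ.erase i, IsInt ((C : ℚ) * ((k j : ℚ) / (n j : ℚ))) := by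
    intro j hj
    have hji : j ≠ i := (Finset.mem_erase.mp hj).1
    rw [cast_mul_div_of_dvd C (k j) (n j) (by have := hn j; omega) (hC j hji)]
    exact isInt_natCast _
  have hsplit : ((k i : ℚ)) / ((n i : ℚ)) =
      (m : ℚ) - ∑ j ∈ Finset.univ.erase i, ((k j : ℚ)) / ((n j : ℚ)) := by
    rw [← hsum, ← Finset.add_sum_erase _ _ (Finset.mem_univ i)]
    ring
  have hint : IsInt ((C : ℚ) * ((k i : ℚ) / (n i : ℚ))) := by
    rw [hsplit, mul_sub, Finset.mul_sum]
    exact ((isInt_natCast C).mul (isInt_intCast m)).sub (IsInt.sum hterm)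
  rw [show (C : ℚ) * ((k i : ℚ) / (n i : ℚ)) = ((C * k i : ℕ) : ℚ) / ((n i : ℚ)) by
    push_cast; ring] at hint
  exact (isInt_div_iff _ _ (by have := hn i; omega)).mp hint

lemma iso_not_sol (n : Fin s → ℕ) (hn : ∀ i, 2 ≤ n i)
    (h : ∃ i, ∀ i', i' ≠ i → Nat.gcd (n i) (n i') = 1) :
    ¬ ∃ k : Fin s → ℕ, (∀ i, 1 ≤ k i ∧ k i ≤ n i - 1) ∧
      ∃ m : ℤ, (∑ i, ((k i : ℚ)) / ((n i : ℚ))) = (m : ℚ) := by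
  rintro ⟨k, hk, m, hm⟩
  obtain ⟨i, hi⟩ := h
  set C := ∏ j ∈ Finset.univ.erase i, n j with hCdef
  have hC : ∀ j, j ≠ i → n j ∣ C :=
    fun j hj => Finset.dvd_prod_of_mem _ (Finset.mem_erase.mpr ⟨hj, Finset.mem_univ j⟩)
  have hdvd := extract n k hn m hm i C hC
  have hcop : Nat.Coprime (n i) C := Nat.Coprime.prod_right fun j hj =>
    hi j (Finset.mem_erase.mp hj).1
  have : n i ∣ k i := (Nat.Coprime.dvd_of_dvd_mul_left hcop hdvd)
  have h1 := (hk i).1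
  have h2 := (hk i).2
  have := Nat.le_of_dvd (by omega) this
  omega

end Extract

section Parity
variable {s : ℕ}

lemma stepA (n k : Fin s → ℕ) (hn : ∀ i, 2 ≤ n i) (hk : ∀ i, 1 ≤ k i ∧ k i ≤ n i - 1)
    (m : ℤ) (hm : (∑ i, ((k i : ℚ)) / ((n i : ℚ))) = (m : ℚ))
    (hP4 : ∀ i, Even (n i) → ∀ p : ℕ, p.Prime → Odd p → p ∣ n i →
      ∀ i', i' ≠ i → ¬ p ∣ n i')
    (i : Fin s) (hiE : Even (n i)) :
    (n i / 2 ^ (n i).factorization 2) ∣ k i := by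
  have hni : n i ≠ 0 := by have := hn i; omega
  have hki : k i ≠ 0 := by have := (hk i).1; omega
  rw [← Nat.factorization_le_iff_dvd (Nat.ordCompl_pos 2 hni).ne' hki]
  intro p
  rw [Nat.factorization_ordCompl (n i) 2]
  by_cases hp2 : p = 2
  · subst hp2; simp
  · rw [Finsupp.erase_ne hp2]
    rcases Nat.eq_zero_or_pos ((n i).factorization p) with h0 | hpos
    · simp [h0]
    · set e := (n i).factorization p with he
      have hp : p.Prime := Nat.prime_of_mem_primeFactors
        ((Nat.support_factorization (n i)) ▸ Finsupp.mem_support_iff.mpr (by omega))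
      have hpodd : Odd p := hp.odd_of_ne_two hp2
      have hpdvd : p ∣ n i := Nat.dvd_of_factorization_pos (by omega)
      -- show p ^ e ∣ k i
      have hpe : p ^ e ∣ k i := by
        set C := (∏ j ∈ Finset.univ.erase i, n j) * (n i / p ^ e) with hC
        have hCdvd : ∀ j, j ≠ i → n j ∣ C := fun j hj =>
          Dvd.dvd.mul_right
            (Finset.dvd_prod_of_mem _ (Finset.mem_erase.mpr ⟨hj, Finset.mem_univ j⟩)) _
        have hdvd := extract n k hn m hm i C hCdvd
        -- n i = p ^ e * (n i / p ^ e)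
        have hsplit : p ^ e * (n i / p ^ e) = n i := Nat.ordProj_mul_ordCompl_eq_self (n i) p
        have hR : 0 < n i / p ^ e := Nat.ordCompl_pos p hni
        have hdvd2 : p ^ e ∣ (∏ j ∈ Finset.univ.erase i, n j) * k i := by
          have h1 : (p ^ e * (n i / p ^ e)) ∣ ((∏ j ∈ Finset.univ.erase i, n j) * k i) * (n i / p ^ e) := by
            rw [hsplit]
            calc n i ∣ C * k i := hdvd
              _ = ((∏ j ∈ Finset.univ.erase i, n j) * k i) * (n i / p ^ e) := by ring
          exact (Nat.mul_dvd_mul_iff_right hR).mp h1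
        have hcop : Nat.Coprime (p ^ e) (∏ j ∈ Finset.univ.erase i, n j) := by
          apply Nat.Coprime.pow_left
          apply Nat.Coprime.prod_right
          intro j hj
          have hji : j ≠ i := (Finset.mem_erase.mp hj).1
          exact (Nat.Prime.coprime_iff_not_dvd hp).mpr (hP4 i hiE p hp hpodd hpdvd j hji)
        exact hcop.dvd_of_dvd_mul_left hdvd2
      exact (Nat.Prime.pow_dvd_iff_le_factorization hp hki).mp hpe

section Parity2
variable {s : ℕ}

lemma odd_prod {α : Type*} (t : Finset α) (f : α → ℕ) (h : ∀ j ∈ t, ¬ Even (f j)) :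
    ¬ Even (∏ j ∈ t, f j) := by
  intro heven
  have h2 : (2 : ℕ) ∣ ∏ j ∈ t, f j := even_iff_two_dvd.mp heven
  obtain ⟨j, hj, hdvd⟩ := (Nat.Prime.prime Nat.prime_two).exists_mem_finset_dvd h2
  exact h j hj (even_iff_two_dvd.mpr hdvd)

lemma parity_not_sol (n : Fin s → ℕ) (hn : ∀ i, 2 ≤ n i)
    (hodd : Odd (Finset.univ.filter (fun i => Even (n i))).card)
    (hP4 : ∀ i, Even (n i) → ∀ p : ℕ, p.Prime → Odd p → p ∣ n i →
      ∀ i', i' ≠ i → ¬ p ∣ n i')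
    (hP5 : (Finset.univ.filter
        (fun i => Even (n i) ∧ 1 < padicValNat 2 (n i))).card ≤ 1) :
    ¬ ∃ k : Fin s → ℕ, (∀ i, 1 ≤ k i ∧ k i ≤ n i - 1) ∧
      ∃ m : ℤ, (∑ i, ((k i : ℚ)) / ((n i : ℚ))) = (m : ℚ) := by
  classical
  rintro ⟨k, hk, m, hm⟩
  set E := Finset.univ.filter (fun i => Even (n i)) with hE
  set a : Fin s → ℕ := fun i => (n i).factorization 2 with ha
  set M : Fin s → ℕ := fun i => n i / 2 ^ a i with hMdef
  set t : Fin s → ℕ := fun i => k i / M i with htdef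
  have hEmem : ∀ i, i ∈ E ↔ Even (n i) := by
    intro i; rw [hE, Finset.mem_filter]; simp
  -- basic facts for i ∈ E
  have hni : ∀ i, n i ≠ 0 := fun i => by have := hn i; omega
  have hsplitn : ∀ i, 2 ^ a i * M i = n i := fun i => Nat.ordProj_mul_ordCompl_eq_self (n i) 2
  have hM0 : ∀ i, 0 < M i := fun i => Nat.ordCompl_pos 2 (hni i)
  have ha1 : ∀ i ∈ E, 1 ≤ a i := by
    intro i hi
    have h2 : (2:ℕ) ∣ n i := even_iff_two_dvd.mp ((hEmem i).mp hi)
    have h3 := Nat.Prime.factorization_pos_of_dvd Nat.prime_two (hni i) h2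
    show 1 ≤ (n i).factorization 2
    omega
  have hMdvd : ∀ i ∈ E, M i ∣ k i := fun i hi =>
    stepA n k hn hk m hm hP4 i ((hEmem i).mp hi)
  have hkeq : ∀ i ∈ E, k i = M i * t i := fun i hi =>
    (Nat.mul_div_cancel' (hMdvd i hi)).symm
  have ht1 : ∀ i ∈ E, 1 ≤ t i := by
    intro i hi
    rcases Nat.eq_zero_or_pos (t i) with h0 | h
    · have h1 := hkeq i hi
      rw [h0, mul_zero] at h1
      have := (hk i).1
      omega
    · exact h
  have htlt : ∀ i ∈ E, t i < 2 ^ a i := by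
    intro i hi
    have h1 : M i * t i ≤ n i - 1 := hkeq i hi ▸ (hk i).2
    have h2 : M i * t i < 2 ^ a i * M i := by
      rw [hsplitn i]; have := hn i; omega
    rw [mul_comm (2 ^ a i) (M i)] at h2
    exact lt_of_mul_lt_mul_left h2 (Nat.zero_le _)
  have hfrac : ∀ i ∈ E, ((k i : ℚ)) / ((n i : ℚ)) = ((t i : ℚ)) / ((2 ^ a i : ℕ) : ℚ) := by
    intro i hi
    rw [hkeq i hi, ← hsplitn i]
    have hM : ((M i : ℚ)) ≠ 0 := Nat.cast_ne_zero.mpr (hM0 i).ne'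
    have h2 : (((2:ℕ) ^ a i : ℕ) : ℚ) ≠ 0 := by positivity
    push_cast
    rw [mul_comm ((2:ℚ) ^ a i) ((M i : ℚ))]
    rw [mul_div_mul_left _ _ hM]
  -- the odd part
  set W := ∏ j ∈ Finset.univ.filter (fun i => ¬ Even (n i)), n j with hW
  have hWodd : ¬ Even W := odd_prod _ _ (fun j hj => (Finset.mem_filter.mp hj).2)
  set S := ∑ j ∈ Finset.univ.filter (fun i => ¬ Even (n i)), ((k j : ℚ)) / ((n j : ℚ)) with hS
  have hWS : IsInt ((W : ℚ) * S) := by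
    rw [hS, Finset.mul_sum]
    apply IsInt.sum
    intro j hj
    rw [cast_mul_div_of_dvd W (k j) (n j) (hni j) (Finset.dvd_prod_of_mem _ hj)]
    exact isInt_natCast _
  obtain ⟨z, hz⟩ := hWS
  have hsumsplit : (∑ i ∈ E, ((k i : ℚ)) / ((n i : ℚ))) + S = (m : ℚ) := by
    rw [hS, hE, ← hm]
    exact Finset.sum_filter_add_sum_filter_not _ _ _
  by_cases hex : ∃ i₀ ∈ E, 2 ≤ a i₀
  · -- one high 2-adic valuation
    obtain ⟨i₀, hi₀, ha₀⟩ := hex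
    have hother : ∀ i ∈ E, i ≠ i₀ → a i = 1 := by
      intro i hi hne
      by_contra hcon
      have hai : 2 ≤ a i := by have := ha1 i hi; omega
      have hmem : ∀ j, j ∈ E → 2 ≤ a j →
          j ∈ Finset.univ.filter (fun i => Even (n i) ∧ 1 < padicValNat 2 (n i)) := by
        intro j hj haj
        rw [Finset.mem_filter]
        refine ⟨Finset.mem_univ _, (hEmem j).mp hj, ?_⟩
        have haj' : 2 ≤ (n j).factorization 2 := haj
        rw [← Nat.factorization_def (n j) Nat.prime_two]
        omega
      have : 1 < (Finset.univ.filter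
          (fun i => Even (n i) ∧ 1 < padicValNat 2 (n i))).card := by
        apply Finset.one_lt_card.mpr
        exact ⟨i, hmem i hi hai, i₀, hmem i₀ hi₀ ha₀, hne⟩
      omega
    have hEsum : (∑ i ∈ E, ((k i : ℚ)) / ((n i : ℚ)))
        = ((t i₀ : ℚ)) / (((2:ℕ) ^ a i₀ : ℕ) : ℚ) + ((E.card - 1 : ℕ) : ℚ) / 2 := by
      rw [← Finset.add_sum_erase _ _ hi₀, hfrac i₀ hi₀]
      congr 1
      have : ∀ i ∈ E.erase i₀, ((k i : ℚ)) / ((n i : ℚ)) = 1 / 2 := by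
        intro i hi
        obtain ⟨hne, hiE⟩ := Finset.mem_erase.mp hi
        have hti : t i = 1 := by
          have h1 := ht1 i hiE
          have h2 := htlt i hiE
          rw [hother i hiE hne] at h2
          omega
        rw [hfrac i hiE, hother i hiE hne, hti]
        norm_num
      rw [Finset.sum_congr rfl this, Finset.sum_const, Finset.card_erase_of_mem hi₀,
        nsmul_eq_mul]
      ring
    obtain ⟨c, hc⟩ := hodd
    have hcard1 : 1 ≤ E.card := Finset.card_pos.mpr ⟨i₀, hi₀⟩
    have hcastc : ((E.card - 1 : ℕ) : ℚ) = 2 * (c : ℚ) := by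
      have : E.card - 1 = 2 * c := by omega
      rw [this]; push_cast; ring
    have heq : ((t i₀ : ℚ)) / (((2:ℕ) ^ a i₀ : ℕ) : ℚ) + 2 * (c:ℚ) / 2 + S = (m : ℚ) := by
      rw [← hcastc, ← hEsum]
      exact hsumsplit
    have hq : ((W * t i₀ : ℕ) : ℚ)
        = ((2:ℚ) ^ (a i₀)) * ((W:ℚ) * (m:ℚ) - (W:ℚ) * (c:ℚ) - (z:ℚ)) := by
      have h2a : ((2:ℚ) ^ (a i₀)) ≠ 0 := by positivity
      field_simp at heq
      push_cast
      push_cast at heq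
      linear_combination (W:ℚ) * heq - (2:ℚ) ^ (a i₀) * hz
    have hqz : ((W * t i₀ : ℕ) : ℤ)
        = (2:ℤ) ^ (a i₀) * ((W:ℤ) * m - (W:ℤ) * (c:ℤ) - z) := by
      exact_mod_cast hq
    have hdvdZ : ((2 ^ (a i₀) : ℕ) : ℤ) ∣ ((W * t i₀ : ℕ) : ℤ) := by
      rw [hqz]; push_cast; exact Dvd.intro _ rfl
    have hdvdN : 2 ^ (a i₀) ∣ W * t i₀ := Int.ofNat_dvd.mp hdvdZ
    have hcop : Nat.Coprime (2 ^ (a i₀)) W := by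
      apply Nat.Coprime.pow_left
      exact (Nat.coprime_two_left).mpr (Nat.not_even_iff_odd.mp hWodd)
    have hdvdt : 2 ^ (a i₀) ∣ t i₀ := hcop.dvd_of_dvd_mul_left hdvdN
    have := Nat.le_of_dvd (by have := ht1 i₀ hi₀; omega) hdvdt
    have := htlt i₀ hi₀
    omega
  · -- all valuations equal 1
    have hall : ∀ i ∈ E, ((k i : ℚ)) / ((n i : ℚ)) = 1 / 2 := by
      intro i hi
      have hai : a i = 1 := by
        have h1 := ha1 i hi
        have h2 : ¬ 2 ≤ a i := fun h => hex ⟨i, hi, h⟩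
        omega
      have hti : t i = 1 := by
        have h1 := ht1 i hi
        have h2 := htlt i hi
        rw [hai] at h2
        omega
      rw [hfrac i hi, hai, hti]
      norm_num
    have hEsum : (∑ i ∈ E, ((k i : ℚ)) / ((n i : ℚ))) = (E.card : ℚ) / 2 := by
      rw [Finset.sum_congr rfl hall, Finset.sum_const, nsmul_eq_mul]
      ring
    have heq : (E.card : ℚ) / 2 + S = (m : ℚ) := by rw [← hEsum]; exact hsumsplit
    have hq : ((W * E.card : ℕ) : ℚ) = 2 * ((W:ℚ) * (m:ℚ) - (z:ℚ)) := by
      push_cast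
      linear_combination 2 * (W:ℚ) * heq - 2 * hz
    have hqz : ((W * E.card : ℕ) : ℤ) = 2 * ((W:ℤ) * m - z) := by exact_mod_cast hq
    have hdvdN : 2 ∣ W * E.card := by
      have : ((2:ℕ) : ℤ) ∣ ((W * E.card : ℕ) : ℤ) := by rw [hqz]; push_cast; exact Dvd.intro _ rfl
      exact Int.ofNat_dvd.mp this
    rcases (Nat.even_mul).mp (even_iff_two_dvd.mpr hdvdN) with h | h
    · exact hWodd h
    · exact (Nat.not_even_iff_odd.mpr hodd) h
end Parity2


lemma den_nat_div (a b : ℕ) (hb : 0 < b) (hab : Nat.Coprime a b) : ((a:ℚ)/(b:ℚ)).den = b := by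
  have h := Rat.den_div_eq_of_coprime (a := (a:ℤ)) (b := (b:ℤ)) (by exact_mod_cast hb)
    (by simpa using hab)
  have : (((a:ℤ):ℚ)/((b:ℤ):ℚ)).den = b := by exact_mod_cast h
  simpa using this

lemma den_sum_dvd {α : Type*} (t : Finset α) (f : α → ℚ) :
    (∑ a ∈ t, f a).den ∣ ∏ a ∈ t, (f a).den := by
  classical
  induction t using Finset.induction_on with
  | empty => simp
  | @insert x t hx ih =>
    rw [Finset.sum_insert hx, Finset.prod_insert hx]
    exact (Rat.add_den_dvd _ _).trans (mul_dvd_mul_left _ ih)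

lemma den_sub_dvd (q r : ℚ) : (q - r).den ∣ q.den * r.den := by
  have := Rat.add_den_dvd q (-r)
  rwa [Rat.den_neg_eq_den, ← sub_eq_add_neg] at this

lemma isInt_iff_den (q : ℚ) : IsInt q ↔ q.den = 1 := by
  constructor
  · rintro ⟨z, rfl⟩; exact Rat.den_intCast z
  · intro h; exact ⟨q.num, (Rat.den_eq_one_iff q).mp h |>.symm⟩

-- === assemble ===
section Assemble
variable {s : ℕ}

lemma assemble (n : Fin s → ℕ) (hn : ∀ i, 2 ≤ n i) (PF : Finset ℕ)
    (hPF : ∀ p ∈ PF, p.Prime)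
    (c : ℕ → Fin s → ℚ)
    (hden : ∀ p ∈ PF, ∀ i, ∃ e : ℕ, (c p i).den = p ^ e)
    (hmul : ∀ p ∈ PF, ∀ i, IsInt ((n i : ℚ) * c p i))
    (hsum : ∀ p ∈ PF, IsInt (∑ i, c p i))
    (hcover : ∀ i, ∃ p ∈ PF, (c p i).den ≠ 1) :
    ∃ k : Fin s → ℕ, (∀ i, 1 ≤ k i ∧ k i ≤ n i - 1) ∧
      ∃ m : ℤ, (∑ i, ((k i : ℚ)) / ((n i : ℚ))) = (m : ℚ) := by
  classical
  set q : Fin s → ℚ := fun i => ∑ p ∈ PF, c p i with hq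
  have hnq : ∀ i, IsInt ((n i : ℚ) * q i) := by
    intro i
    rw [hq]
    simp only
    rw [Finset.mul_sum]
    exact IsInt.sum fun p hp => hmul p hp i
  choose z hz using hnq
  have hn0 : ∀ i, (0:ℤ) < (n i : ℤ) := fun i => by have := hn i; omega
  have hnQ : ∀ i, ((n i : ℚ)) ≠ 0 := fun i => by
    have := hn i
    simp only [ne_eq, Nat.cast_eq_zero]; omega
  -- q i is not an integer
  have hqnotint : ∀ i, ¬ IsInt (q i) := by
    intro i hint
    obtain ⟨p₀, hp₀PF, hp₀den⟩ := hcover i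
    have hp₀ : p₀.Prime := hPF p₀ hp₀PF
    obtain ⟨e, he⟩ := hden p₀ hp₀PF i
    have he1 : 1 ≤ e := by
      rcases Nat.eq_zero_or_pos e with h0 | h; · rw [h0, pow_zero] at he; exact absurd he hp₀den
      · exact h
    set r : ℚ := ∑ p ∈ PF.erase p₀, c p i with hr
    have hden_r : ¬ (p₀ ∣ r.den) := by
      intro hdvd
      have h1 : r.den ∣ ∏ p ∈ PF.erase p₀, (c p i).den := den_sum_dvd _ _
      have h2 : p₀ ∣ ∏ p ∈ PF.erase p₀, (c p i).den := hdvd.trans h1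
      obtain ⟨p, hp, hpd⟩ := (Nat.Prime.prime hp₀).exists_mem_finset_dvd h2
      obtain ⟨ep, hep⟩ := hden p (Finset.mem_of_mem_erase hp) i
      rw [hep] at hpd
      have : p₀ = p := by
        have hpprime : p.Prime := hPF p (Finset.mem_of_mem_erase hp)
        exact (Nat.prime_dvd_prime_iff_eq hp₀ hpprime).mp (Nat.Prime.dvd_of_dvd_pow hp₀ hpd)
      exact (Finset.mem_erase.mp hp).1 this.symm
    have hsplit : c p₀ i = q i - r := by
      rw [hq, hr]
      simp only
      rw [← Finset.add_sum_erase _ _ hp₀PF]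
      ring
    have : (c p₀ i).den ∣ (q i).den * r.den := hsplit ▸ den_sub_dvd (q i) r
    rw [(isInt_iff_den _).mp hint, one_mul, he] at this
    exact hden_r ((dvd_pow_self p₀ (by omega : e ≠ 0)).trans this)
  -- define k
  set K : Fin s → ℤ := fun i => (z i) % (n i : ℤ) with hK
  have hK0 : ∀ i, 0 ≤ K i := fun i => Int.emod_nonneg _ (by have := hn i; omega)
  have hKlt : ∀ i, K i < (n i : ℤ) := fun i => Int.emod_lt_of_pos _ (hn0 i)
  have hfrac : ∀ i, ((K i : ℚ)) / ((n i : ℚ)) = q i - ((z i / (n i : ℤ) : ℤ) : ℚ) := by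
    intro i
    have hKi : (K i : ℚ) = (z i : ℚ) - (n i : ℚ) * ((z i / (n i : ℤ) : ℤ) : ℚ) := by
      simp only [hK]
      rw [Int.emod_def]
      push_cast
      ring
    rw [hKi, ← hz i, ← mul_sub, mul_div_cancel_left₀ _ (hnQ i)]
  have hKne : ∀ i, K i ≠ 0 := by
    intro i h0
    apply hqnotint i
    have : ((K i : ℚ)) / ((n i : ℚ)) = 0 := by rw [h0]; simp
    rw [hfrac i] at this
    exact ⟨_, by linarith [this]⟩
  refine ⟨fun i => (K i).toNat, fun i => ⟨?_, ?_⟩, ?_⟩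
  · show 1 ≤ (K i).toNat
    have := hK0 i; have := hKne i; omega
  · show (K i).toNat ≤ n i - 1
    have := hKlt i; have := hK0 i; have := hn i; omega
  · have hsum2 : (∑ i, ((((K i).toNat : ℕ) : ℚ)) / ((n i : ℚ)))
        = (∑ i, q i) - ∑ i, ((z i / (n i : ℤ) : ℤ) : ℚ) := by
      rw [← Finset.sum_sub_distrib]
      apply Finset.sum_congr rfl
      intro i _
      rw [← hfrac i]
      congr 1
      have := hK0 i
      exact_mod_cast congrArg (Int.cast : ℤ → ℚ) (Int.toNat_of_nonneg this)
    have hqsum : IsInt (∑ i, q i) := by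
      rw [hq]
      simp only
      rw [Finset.sum_comm]
      exact IsInt.sum fun p hp => hsum p hp
    obtain ⟨w, hw⟩ := hqsum
    refine ⟨w - ∑ i, (z i / (n i : ℤ)), ?_⟩
    rw [hsum2, hw]
    push_cast
    ring
end Assemble

section OddT
variable {s : ℕ}

lemma oddT (p : ℕ) (hp : p.Prime) (hodd : Odd p) (S : Finset (Fin s)) (hcard : S.card ≠ 1) :
    ∃ γ : Fin s → ℕ, (∀ i ∈ S, 1 ≤ γ i ∧ γ i < p) ∧ p ∣ ∑ i ∈ S, γ i := by
  classical
  have hp3 : 3 ≤ p := by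
    have h2 := hp.two_le
    obtain ⟨w, hw⟩ := hodd
    omega
  rcases S.eq_empty_or_nonempty with rfl | ⟨x, hx⟩
  · exact ⟨fun _ => 1, by simp, by simp⟩
  have hc2 : 2 ≤ S.card := by
    have : 1 ≤ S.card := Finset.card_pos.mpr ⟨x, hx⟩
    omega
  set r := (S.card - 1) % p with hr
  have hrlt : r < p := Nat.mod_lt _ (by omega)
  by_cases hr0 : r = 0
  · -- S.card ≡ 1 mod p
    have hy : (S.erase x).Nonempty := by
      rw [← Finset.card_pos, Finset.card_erase_of_mem hx]
      omega
    obtain ⟨y, hy⟩ := hy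
    have hyx : y ≠ x := (Finset.mem_erase.mp hy).1
    have hyS : y ∈ S := (Finset.mem_erase.mp hy).2
    refine ⟨fun i => if i = x then 2 else if i = y then p - 1 else 1, ?_, ?_⟩
    · intro i _
      dsimp only
      rcases eq_or_ne i x with rfl | h1
      · rw [if_pos rfl]; omega
      · rcases eq_or_ne i y with rfl | h2
        · rw [if_neg h1, if_pos rfl]; omega
        · rw [if_neg h1, if_neg h2]; omega
    · have hsum : ∑ i ∈ S, (if i = x then 2 else if i = y then p - 1 else 1)
          = 2 + ((p - 1) + (S.card - 2)) := by
        rw [← Finset.add_sum_erase _ _ hx, if_pos rfl]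
        congr 1
        rw [← Finset.add_sum_erase _ _ hy, if_neg hyx, if_pos rfl]
        congr 1
        have : ∀ i ∈ (S.erase x).erase y,
            (if i = x then 2 else if i = y then p - 1 else 1) = 1 := by
          intro i hi
          have h1 := (Finset.mem_erase.mp hi).1
          have h2 := (Finset.mem_erase.mp (Finset.mem_erase.mp hi).2).1
          simp [h1, h2]
        rw [Finset.sum_congr rfl this, Finset.sum_const, smul_eq_mul, mul_one,
          Finset.card_erase_of_mem hy, Finset.card_erase_of_mem hx]
        omega
      rw [hsum]
      have hdvd : p ∣ S.card - 1 := Nat.dvd_of_mod_eq_zero (by rw [← hr]; exact hr0)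
      obtain ⟨w, hw⟩ := hdvd
      have hpw : p * (w + 1) = p * w + p := by ring
      have : 2 + ((p - 1) + (S.card - 2)) = p * (w + 1) := by omega
      rw [this]
      exact Dvd.intro _ rfl
  · refine ⟨fun i => if i = x then p - r else 1, ?_, ?_⟩
    · intro i _
      dsimp only
      rcases eq_or_ne i x with rfl | h1
      · rw [if_pos rfl]; omega
      · rw [if_neg h1]; omega
    · have hsum : ∑ i ∈ S, (if i = x then p - r else 1) = (p - r) + (S.card - 1) := by
        rw [← Finset.add_sum_erase _ _ hx, if_pos rfl]
        congr 1
        have : ∀ i ∈ S.erase x, (if i = x then p - r else 1) = 1 := by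
          intro i hi
          simp [(Finset.mem_erase.mp hi).1]
        rw [Finset.sum_congr rfl this, Finset.sum_const, smul_eq_mul, mul_one,
          Finset.card_erase_of_mem hx]
      rw [hsum]
      have : S.card - 1 = p * ((S.card - 1) / p) + r := (Nat.div_add_mod _ _).symm
      have hpw : p * ((S.card - 1) / p + 1) = p * ((S.card - 1) / p) + p := by ring
      have heq : (p - r) + (S.card - 1) = p * ((S.card - 1) / p + 1) := by omega
      rw [heq]
      exact Dvd.intro _ rfl
end OddT

section Construct
variable {s : ℕ}

open scoped Classical in
lemma construct (n : Fin s → ℕ) (hn : ∀ i, 2 ≤ n i)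
    (T2 H : Finset (Fin s))
    (hT2E : ∀ i ∈ T2, 2 ∣ n i)
    (hH4 : ∀ i ∈ H, 4 ∣ n i)
    (hHT2 : H ⊆ T2)
    (hcase : (H = ∅ ∧ Even T2.card) ∨ (H.card = 2 ∧ Odd T2.card))
    (hU : ∀ i, (¬ ∃ p : ℕ, p.Prime ∧ Odd p ∧ p ∣ n i ∧ ∃ j, j ≠ i ∧ p ∣ n j) → i ∈ T2) :
    ∃ k : Fin s → ℕ, (∀ i, 1 ≤ k i ∧ k i ≤ n i - 1) ∧
      ∃ m : ℤ, (∑ i, ((k i : ℚ)) / ((n i : ℚ))) = (m : ℚ) := by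
  set PF : Finset ℕ := insert 2 ((∏ i, n i).primeFactors) with hPFdef
  set Sp : ℕ → Finset (Fin s) :=
    fun p => Finset.univ.filter (fun i => p ∣ n i ∧ ∃ j, j ≠ i ∧ p ∣ n j) with hSpdef
  have hSpcard : ∀ p, (Sp p).card ≠ 1 := by
    intro p hcard1
    obtain ⟨x, hxeq⟩ := Finset.card_eq_one.mp hcard1
    have hx : x ∈ Sp p := hxeq ▸ Finset.mem_singleton_self x
    obtain ⟨hdx, j, hji, hdj⟩ := (Finset.mem_filter.mp hx).2
    have hj : j ∈ Sp p := by
      rw [hSpdef, Finset.mem_filter]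
      exact ⟨Finset.mem_univ _, hdj, ⟨x, fun h => hji (h.symm), hdx⟩⟩
    rw [hxeq, Finset.mem_singleton] at hj
    exact hji hj
  -- choice of gamma
  have hγex : ∀ p : ℕ, p.Prime → Odd p → ∃ γ : Fin s → ℕ,
      (∀ i ∈ Sp p, 1 ≤ γ i ∧ γ i < p) ∧ p ∣ ∑ i ∈ Sp p, γ i :=
    fun p hp hodd => oddT p hp hodd (Sp p) (hSpcard p)
  set γ : ℕ → Fin s → ℕ := fun p =>
    if h : p.Prime ∧ Odd p then Classical.choose (hγex p h.1 h.2) else fun _ => 1 with hγdef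
  have hγspec : ∀ p : ℕ, (hp : p.Prime) → (ho : Odd p) →
      (∀ i ∈ Sp p, 1 ≤ γ p i ∧ γ p i < p) ∧ p ∣ ∑ i ∈ Sp p, γ p i := by
    intro p hp ho
    have : γ p = Classical.choose (hγex p hp ho) := by
      simp only [hγdef]; rw [dif_pos ⟨hp, ho⟩]
    rw [this]
    exact Classical.choose_spec (hγex p hp ho)
  set c : ℕ → Fin s → ℚ := fun p i =>
    if p = 2 then (if i ∈ T2 then (if i ∈ H then 1/4 else 1/2) else 0)
    else if i ∈ Sp p then ((γ p i : ℚ)) / ((p : ℚ)) else 0 with hcdef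
  have hprime : ∀ p ∈ PF, p.Prime := by
    intro p hp
    rcases Finset.mem_insert.mp hp with rfl | hp
    · exact Nat.prime_two
    · exact Nat.prime_of_mem_primeFactors hp
  have hd14 : ((1:ℚ)/4).den = 4 := by
    have h : ((1:ℚ)/4) = (((1:ℕ):ℚ))/(((4:ℕ):ℚ)) := by norm_num
    rw [h, den_nat_div 1 4 (by norm_num) (Nat.coprime_one_left 4)]
  have hd12 : ((1:ℚ)/2).den = 2 := by
    have h : ((1:ℚ)/2) = (((1:ℕ):ℚ))/(((2:ℕ):ℚ)) := by norm_num
    rw [h, den_nat_div 1 2 (by norm_num) (Nat.coprime_one_left 2)]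
  have hdγ : ∀ p, p ≠ 2 → p ∈ PF → ∀ i ∈ Sp p, (((γ p i : ℚ)) / ((p : ℚ))).den = p := by
    intro p hp2 hpPF i hi
    have hp := hprime p hpPF
    have ho := hp.odd_of_ne_two hp2
    have hb := (hγspec p hp ho).1 i hi
    apply den_nat_div _ _ (by have := hp.two_le; omega)
    have : ¬ p ∣ γ p i := fun hdvd => by
      have := Nat.le_of_dvd (by omega) hdvd; omega
    exact (Nat.coprime_comm.mp ((hp.coprime_iff_not_dvd).mpr this))
  have hc2val : ∀ i, c 2 i = if i ∈ T2 then (if i ∈ H then (1:ℚ)/4 else 1/2) else 0 := by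
    intro i; simp only [hcdef]; norm_num
  have hcodd : ∀ p, p ≠ 2 → ∀ i, c p i = if i ∈ Sp p then ((γ p i : ℚ)) / ((p : ℚ)) else 0 := by
    intro p hp2 i; simp only [hcdef]; rw [if_neg hp2]
  refine assemble n hn PF hprime c ?_ ?_ ?_ ?_
  · -- denominators are prime powers
    intro p hpPF i
    by_cases hp2 : p = 2
    · subst hp2
      rw [hc2val i]
      by_cases hT : i ∈ T2
      · rw [if_pos hT]
        by_cases hh : i ∈ H
        · exact ⟨2, by rw [if_pos hh, hd14]; norm_num⟩
        · exact ⟨1, by rw [if_neg hh, hd12]; norm_num⟩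
      · exact ⟨0, by rw [if_neg hT]; simp⟩
    · rw [hcodd p hp2 i]
      by_cases hS : i ∈ Sp p
      · exact ⟨1, by rw [if_pos hS, hdγ p hp2 hpPF i hS]; ring⟩
      · exact ⟨0, by rw [if_neg hS]; simp⟩
  · -- n i * c p i integral
    intro p hpPF i
    by_cases hp2 : p = 2
    · subst hp2
      rw [hc2val i]
      by_cases hT : i ∈ T2
      · rw [if_pos hT]
        by_cases hh : i ∈ H
        · rw [if_pos hh]
          obtain ⟨w, hw⟩ := hH4 i hh
          exact ⟨w, by rw [hw]; push_cast; ring⟩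
        · rw [if_neg hh]
          obtain ⟨w, hw⟩ := hT2E i hT
          exact ⟨w, by rw [hw]; push_cast; ring⟩
      · rw [if_neg hT, mul_zero]; exact ⟨0, by simp⟩
    · rw [hcodd p hp2 i]
      by_cases hS : i ∈ Sp p
      · rw [if_pos hS]
        have hdvd : p ∣ n i := ((Finset.mem_filter.mp hS).2).1
        obtain ⟨w, hw⟩ := hdvd
        have hp0 : ((p:ℚ)) ≠ 0 := by
          have := (hprime p hpPF).two_le
          simp only [ne_eq, Nat.cast_eq_zero]; omega
        refine ⟨w * γ p i, ?_⟩
        rw [hw]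
        push_cast
        field_simp
      · rw [if_neg hS, mul_zero]; exact ⟨0, by simp⟩
  · -- column sums integral
    intro p hpPF
    by_cases hp2 : p = 2
    · subst hp2
      have hsum1 : (∑ i, c 2 i) = ∑ i ∈ T2, (if i ∈ H then (1:ℚ)/4 else 1/2) := by
        rw [Finset.sum_congr rfl (fun i _ => hc2val i)]
        rw [Finset.sum_ite_mem Finset.univ T2 _, Finset.univ_inter]
      have hfil : T2.filter (fun i => i ∈ H) = H := by
        rw [Finset.filter_mem_eq_inter]
        exact Finset.inter_eq_right.mpr hHT2
      have hcardnot : (T2.filter (fun i => ¬ i ∈ H)).card = T2.card - H.card := by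
        have h := Finset.card_filter_add_card_filter_not
          (s := T2) (p := fun i => i ∈ H)
        rw [hfil] at h
        omega
      have hsum2 : (∑ i ∈ T2, (if i ∈ H then (1:ℚ)/4 else 1/2))
          = (H.card : ℚ) * (1/4) + ((T2.card - H.card : ℕ) : ℚ) * (1/2) := by
        rw [← Finset.sum_filter_add_sum_filter_not T2 (fun i => i ∈ H)]
        congr 1
        · rw [Finset.sum_congr rfl
            (fun i hi => if_pos (Finset.mem_filter.mp hi).2), Finset.sum_const, hfil,
            nsmul_eq_mul]
        · rw [Finset.sum_congr rfl
            (fun i hi => if_neg (Finset.mem_filter.mp hi).2), Finset.sum_const, hcardnot,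
            nsmul_eq_mul]
      rcases hcase with ⟨hHe, heven⟩ | ⟨hH2, hoddc⟩
      · obtain ⟨w, hw⟩ := heven
        refine ⟨w, ?_⟩
        rw [hsum1, hsum2, hHe, Finset.card_empty, Nat.sub_zero, hw]
        push_cast
        ring
      · obtain ⟨w, hw⟩ := hoddc
        have hcard2 : 2 ≤ T2.card := hH2 ▸ Finset.card_le_card hHT2
        have hsub : T2.card - H.card = 2 * (w - 1) + 1 := by omega
        have hwpos : 1 ≤ w := by omega
        refine ⟨((w - 1 : ℕ) : ℤ) + 1, ?_⟩
        rw [hsum1, hsum2, hsub, hH2]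
        push_cast
        ring
    · have ho := (hprime p hpPF).odd_of_ne_two hp2
      have hspec := hγspec p (hprime p hpPF) ho
      obtain ⟨w, hw⟩ := hspec.2
      have hp0 : ((p:ℚ)) ≠ 0 := by
        have := (hprime p hpPF).two_le
        simp only [ne_eq, Nat.cast_eq_zero]; omega
      have hsum1 : (∑ i, c p i) = ∑ i ∈ Sp p, ((γ p i : ℚ)) / ((p : ℚ)) := by
        rw [Finset.sum_congr rfl (fun i _ => hcodd p hp2 i)]
        rw [Finset.sum_ite_mem Finset.univ (Sp p) _, Finset.univ_inter]
      refine ⟨w, ?_⟩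
      rw [hsum1, ← Finset.sum_div]
      rw [show (∑ i ∈ Sp p, ((γ p i : ℚ))) = ((∑ i ∈ Sp p, γ p i : ℕ) : ℚ) by push_cast; rfl]
      rw [hw]
      push_cast
      field_simp
  · -- cover
    intro i
    by_cases hsh : ∃ p : ℕ, p.Prime ∧ Odd p ∧ p ∣ n i ∧ ∃ j, j ≠ i ∧ p ∣ n j
    · obtain ⟨p, hp, ho, hdvd, j, hji, hdj⟩ := hsh
      have hp2 : p ≠ 2 := by
        rintro rfl
        exact (Nat.not_odd_iff_even.mpr (even_two)) ho
      have hpPF : p ∈ PF := by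
        rw [hPFdef]
        apply Finset.mem_insert_of_mem
        rw [Nat.mem_primeFactors]
        refine ⟨hp, hdvd.trans (Finset.dvd_prod_of_mem _ (Finset.mem_univ i)), ?_⟩
        apply Finset.prod_ne_zero_iff.mpr
        intro a _
        have := hn a; omega
      have hiS : i ∈ Sp p := by
        rw [hSpdef, Finset.mem_filter]
        exact ⟨Finset.mem_univ _, hdvd, j, hji, hdj⟩
      refine ⟨p, hpPF, ?_⟩
      rw [hcodd p hp2 i, if_pos hiS, hdγ p hp2 hpPF i hiS]
      have := hp.two_le; omega
    · have hiT : i ∈ T2 := hU i hsh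
      refine ⟨2, Finset.mem_insert_self 2 _, ?_⟩
      rw [hc2val i, if_pos hiT]
      by_cases hh : i ∈ H
      · rw [if_pos hh, hd14]; omega
      · rw [if_neg hh, hd12]; omega
end Construct

open scoped Classical in
lemma construct_main {s : ℕ} (n : Fin s → ℕ) (hn : ∀ i, 2 ≤ n i)
    (hni : ∀ i, ∃ j, j ≠ i ∧ Nat.gcd (n i) (n j) ≠ 1)
    (hnii : ¬ (Even (Finset.univ.lcm n) ∧
        Odd (Finset.univ.filter (fun i => Even (n i))).card ∧
        3 ≤ (Finset.univ.filter (fun i => Even (n i))).card ∧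
        (∀ i, Even (n i) → ∀ p : ℕ, p.Prime → Odd p → p ∣ n i →
          ∀ i', i' ≠ i → ¬ p ∣ n i') ∧
        (Finset.univ.filter
            (fun i => Even (n i) ∧ 1 < padicValNat 2 (n i))).card ≤ 1)) :
    ∃ k : Fin s → ℕ, (∀ i, 1 ≤ k i ∧ k i ≤ n i - 1) ∧
      ∃ m : ℤ, (∑ i, ((k i : ℚ)) / ((n i : ℚ))) = (m : ℚ) := by
  set U : Finset (Fin s) := Finset.univ.filter
    (fun i => ¬∃ p : ℕ, p.Prime ∧ Odd p ∧ p ∣ n i ∧ ∃ j, j ≠ i ∧ p ∣ n j) with hUdef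
  have hUmem : ∀ i, i ∈ U ↔
      ¬∃ p : ℕ, p.Prime ∧ Odd p ∧ p ∣ n i ∧ ∃ j, j ≠ i ∧ p ∣ n j := by
    intro i; rw [hUdef, Finset.mem_filter]; simp
  have hU2 : ∀ i ∈ U, 2 ∣ n i ∧ ∃ j, j ≠ i ∧ 2 ∣ n j := by
    intro i hi
    obtain ⟨j, hji, hgcd⟩ := hni i
    set g := Nat.gcd (n i) (n j) with hg
    have hq : g.minFac.Prime := Nat.minFac_prime hgcd
    have hqi : g.minFac ∣ n i := (Nat.minFac_dvd g).trans (Nat.gcd_dvd_left _ _)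
    have hqj : g.minFac ∣ n j := (Nat.minFac_dvd g).trans (Nat.gcd_dvd_right _ _)
    have hq2 : g.minFac = 2 := by
      by_contra hne
      exact ((hUmem i).mp hi) ⟨g.minFac, hq, hq.odd_of_ne_two hne, hqi, j, hji, hqj⟩
    rw [hq2] at hqi hqj
    exact ⟨hqi, j, hji, hqj⟩
  set E : Finset (Fin s) := Finset.univ.filter (fun i => Even (n i)) with hEdef
  have hEmem : ∀ i, i ∈ E ↔ Even (n i) := by
    intro i; rw [hEdef, Finset.mem_filter]; simp
  have hUsubE : U ⊆ E := by
    intro i hi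
    rw [hEmem]
    exact even_iff_two_dvd.mpr (hU2 i hi).1
  have hUcond : ∀ i, (¬ ∃ p : ℕ, p.Prime ∧ Odd p ∧ p ∣ n i ∧ ∃ j, j ≠ i ∧ p ∣ n j) → i ∈ U :=
    fun i h => (hUmem i).mpr h
  by_cases hUeven : Even U.card
  · exact construct n hn U ∅ (fun i hi => (hU2 i hi).1) (fun i hi => absurd hi
      (Finset.notMem_empty i)) (Finset.empty_subset U) (Or.inl ⟨rfl, hUeven⟩) hUcond
  · have hUodd : Odd U.card := Nat.not_even_iff_odd.mp hUeven
    have hUne : U.Nonempty := by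
      rw [← Finset.card_pos]
      rcases hUodd with ⟨w, hw⟩; omega
    by_cases hEU : E ⊆ U
    · -- E = U : derive ¬P5 from hnii
      have hEeqU : E = U := Finset.Subset.antisymm hEU hUsubE
      obtain ⟨x0, hx0⟩ := hUne
      have hlcm : Even (Finset.univ.lcm n) := by
        apply even_iff_two_dvd.mpr
        exact (hU2 x0 hx0).1.trans (Finset.dvd_lcm (Finset.mem_univ x0))
      have hEodd : Odd E.card := by rw [hEeqU]; exact hUodd
      have hcard2 : 2 ≤ E.card := by
        obtain ⟨j, hjx, hj2⟩ := (hU2 x0 hx0).2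
        have hjE : j ∈ E := (hEmem j).mpr (even_iff_two_dvd.mpr hj2)
        have hxE : x0 ∈ E := hUsubE hx0
        have : 1 < E.card := Finset.one_lt_card.mpr ⟨j, hjE, x0, hxE, hjx⟩
        omega
      have hE3 : 3 ≤ E.card := by
        rcases hEodd with ⟨w, hw⟩; omega
      have hP4 : ∀ i, Even (n i) → ∀ p : ℕ, p.Prime → Odd p → p ∣ n i →
          ∀ i', i' ≠ i → ¬ p ∣ n i' := by
        intro i hiE p hp hodd hdvd i' hne hdvd'
        have hiU : i ∈ U := hEeqU ▸ (hEmem i).mpr hiE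
        exact ((hUmem i).mp hiU) ⟨p, hp, hodd, hdvd, i', fun h => hne h, hdvd'⟩
      have hnP5 : ¬ (Finset.univ.filter
          (fun i => Even (n i) ∧ 1 < padicValNat 2 (n i))).card ≤ 1 := by
        intro hP5
        exact hnii ⟨hlcm, hEodd, hE3, hP4, hP5⟩
      have h2lt : 1 < (Finset.univ.filter
          (fun i => Even (n i) ∧ 1 < padicValNat 2 (n i))).card := by omega
      obtain ⟨x, hx, y, hy, hxy⟩ := Finset.one_lt_card.mp h2lt
      have hfour : ∀ z, z ∈ (Finset.univ.filter
          (fun i => Even (n i) ∧ 1 < padicValNat 2 (n i))) → 4 ∣ n z := by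
        intro z hz
        obtain ⟨_, hzE, hzval⟩ : z ∈ Finset.univ ∧ Even (n z) ∧ 1 < padicValNat 2 (n z) := by
          simpa using Finset.mem_filter.mp hz
        have hnz : n z ≠ 0 := by have := hn z; omega
        have : (2:ℕ)^2 ∣ n z := by
          rw [Nat.Prime.pow_dvd_iff_le_factorization Nat.prime_two hnz,
            Nat.factorization_def (n z) Nat.prime_two]
          omega
        simpa using this
      have hmemE : ∀ z, z ∈ (Finset.univ.filter
          (fun i => Even (n i) ∧ 1 < padicValNat 2 (n i))) → z ∈ E := by
        intro z hz
        have := Finset.mem_filter.mp hz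
        exact (hEmem z).mpr this.2.1
      apply construct n hn E {x, y}
      · intro i hi
        exact even_iff_two_dvd.mp ((hEmem i).mp hi)
      · intro i hi
        rcases Finset.mem_insert.mp hi with rfl | hi
        · exact hfour i hx
        · rw [Finset.mem_singleton] at hi; subst hi; exact hfour i hy
      · intro i hi
        rcases Finset.mem_insert.mp hi with rfl | hi
        · exact hmemE i hx
        · rw [Finset.mem_singleton] at hi; subst hi; exact hmemE i hy
      · refine Or.inr ⟨?_, hEodd⟩
        rw [Finset.card_insert_of_notMem (by simpa using hxy), Finset.card_singleton]
      · intro i h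
        exact hEeqU ▸ hUcond i h
    · -- pick x ∈ E \ U
      obtain ⟨x, hxE, hxU⟩ := Finset.not_subset.mp hEU
      apply construct n hn (insert x U) ∅
      · intro i hi
        rcases Finset.mem_insert.mp hi with rfl | hi
        · exact even_iff_two_dvd.mp ((hEmem i).mp hxE)
        · exact (hU2 i hi).1
      · intro i hi; exact absurd hi (Finset.notMem_empty i)
      · exact Finset.empty_subset _
      · refine Or.inl ⟨rfl, ?_⟩
        rw [Finset.card_insert_of_notMem hxU]
        rcases hUodd with ⟨w, hw⟩
        exact ⟨w + 1, by omega⟩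
      · intro i h
        exact Finset.mem_insert_of_mem (hUcond i h)


theorem one_not_eigenvalue_iff {s : ℕ} (hs : 0 < s) (n : Fin s → ℕ) (hn : ∀ i, 2 ≤ n i)
    (h2 : (Finset.univ.filter (fun i => n i = 2)).card ≤ 1) :
    ¬ (Chi n).IsRoot 1 ↔
      ((∃ i, ∀ i', i' ≠ i → Nat.gcd (n i) (n i') = 1) ∨
       (Even (Finset.univ.lcm n) ∧
        Odd (Finset.univ.filter (fun i => Even (n i))).card ∧
        3 ≤ (Finset.univ.filter (fun i => Even (n i))).card ∧
        (∀ i, Even (n i) → ∀ p : ℕ, p.Prime → Odd p → p ∣ n i →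
          ∀ i', i' ≠ i → ¬ p ∣ n i') ∧
        (Finset.univ.filter
            (fun i => Even (n i) ∧ 1 < padicValNat 2 (n i))).card ≤ 1)) := by
  rw [chi_root_iff_sol n hn]
  constructor
  · intro hnsol
    by_contra hR
    obtain ⟨hnA, hnB⟩ := not_or.mp hR
    have hni : ∀ i, ∃ j, j ≠ i ∧ Nat.gcd (n i) (n j) ≠ 1 := by
      intro i
      by_contra h
      push_neg at h
      exact hnA ⟨i, fun i' hi' => h i' hi'⟩
    exact hnsol (construct_main n hn hni hnB)
  · intro hR hsol
    rcases hR with hA | hB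
    · exact iso_not_sol n hn hA hsol
    · exact parity_not_sol n hn hB.2.1 hB.2.2.2.1 hB.2.2.2.2 hsol
end Parity
end

section
/- Let n_1,…,n_s ≥ 2 be weights and let m_1 denote the multiplicity of 1 as a root of χ_{[n_1,…,n_s]} in ℂ. Then the reciprocal polynomial satisfies χ_{[n_1,…,n_s]}^* = (−1)^{m_1} · χ_{[n_1,…,n_s]}; in particular χ_{[n_1,…,n_s]} is self-reciprocal if and only if m_1 is even. -/
open Matrix Polynomial

lemma phiA_pow_self (n : ℕ) (hn : 2 ≤ n) : PhiA n ^ n = 1 := by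
  set Cm : Matrix (Fin n) (Fin n) ℤ :=
    Matrix.of (fun j k => if (k : ℕ) = ((j : ℕ) + 1) % n then 1 else 0) with hCmdef
  set Q : Matrix (Fin n) (Fin (n - 1)) ℤ :=
    Matrix.of (fun j i => if (j : ℕ) = n - 1 then -1 else if (i : ℕ) = (j : ℕ) then 1 else 0)
      with hQdef
  set L : Matrix (Fin (n - 1)) (Fin n) ℤ :=
    Matrix.of (fun i j => if (i : ℕ) = (j : ℕ) then 1 else 0) with hLdef
  have hnpos : 0 < n := by omega
  have hLQ : L * Q = 1 := by
    ext i i'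
    rw [Matrix.mul_apply]
    rw [Finset.sum_eq_single (⟨(i : ℕ), by omega⟩ : Fin n)]
    · have hi : (i : ℕ) ≠ n - 1 := by omega
      simp [hLdef, hQdef, hi, Matrix.one_apply, Fin.ext_iff, eq_comm]
    · intro j _ hj
      have : (i : ℕ) ≠ (j : ℕ) := fun h => hj (by simp [Fin.ext_iff, ← h])
      simp [hLdef, this]
    · simp
  have hQPhi : Q * PhiA n = Cm * Q := by
    ext j i
    have hi2 := i.isLt
    rw [Matrix.mul_apply, Matrix.mul_apply]
    have hmod : ((j : ℕ) + 1) % n < n := Nat.mod_lt _ hnpos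
    rw [Finset.sum_eq_single (⟨((j : ℕ) + 1) % n, hmod⟩ : Fin n)]
    rotate_left
    · intro k _ hk
      have : ¬ ((k : ℕ) = ((j : ℕ) + 1) % n) := fun h => hk (by simp [Fin.ext_iff, h])
      simp [hCmdef, this]
    · simp
    by_cases hj : (j : ℕ) = n - 1
    · -- last row
      have h1 : ((j : ℕ) + 1) % n = 0 := by
        rw [hj, Nat.sub_add_cancel (by omega), Nat.mod_self]
      have hsplit : ∀ l : Fin (n - 1), PhiA n l i =
          (if (l : ℕ) = n - 2 then (-1 : ℤ) else 0) +
          (if ((l : ℕ) ≠ n - 2 ∧ (i : ℕ) = (l : ℕ) + 1) then 1 else 0) := by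
        intro l
        by_cases h : (l : ℕ) = n - 2 <;> simp [PhiA, h]
      have hS : ∑ l : Fin (n - 1), PhiA n l i = if (i : ℕ) = 0 then -1 else 0 := by
        rw [Finset.sum_congr rfl (fun l _ => hsplit l), Finset.sum_add_distrib]
        have hA : ∑ l : Fin (n - 1), (if (l : ℕ) = n - 2 then (-1 : ℤ) else 0) = -1 := by
          rw [Finset.sum_eq_single (⟨n - 2, by omega⟩ : Fin (n - 1))]
          · simp
          · intro l _ hl
            have : (l : ℕ) ≠ n - 2 := fun h => hl (by simp [Fin.ext_iff, h])
            simp [this]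
          · simp
        have hB : ∑ l : Fin (n - 1), (if ((l : ℕ) ≠ n - 2 ∧ (i : ℕ) = (l : ℕ) + 1) then (1 : ℤ) else 0)
            = if (i : ℕ) = 0 then 0 else 1 := by
          by_cases hi : (i : ℕ) = 0
          · rw [if_pos hi]
            apply Finset.sum_eq_zero
            intro l _
            rw [if_neg]
            omega
          · rw [if_neg hi, Finset.sum_eq_single (⟨(i : ℕ) - 1, by omega⟩ : Fin (n - 1))]
            · rw [if_pos]
              constructor <;> simp <;> omega
            · intro l _ hl
              have : ¬ ((i : ℕ) = (l : ℕ) + 1) := by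
                intro h
                exact hl (by simp [Fin.ext_iff]; omega)
              simp [this]
            · simp
        rw [hA, hB]
        split_ifs <;> ring
      have hQrow : ∀ l : Fin (n - 1), Q j l = -1 := by intro l; simp [hQdef, hj]
      calc ∑ l, Q j l * PhiA n l i = ∑ l, (-1) * PhiA n l i := by
            exact Finset.sum_congr rfl fun l _ => by rw [hQrow]
        _ = -1 * ∑ l, PhiA n l i := by rw [← Finset.mul_sum]
        _ = Cm j ⟨((j : ℕ) + 1) % n, hmod⟩ * Q ⟨((j : ℕ) + 1) % n, hmod⟩ i := by
            rw [hS]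
            have h0 : (0 : ℕ) ≠ n - 1 := by omega
            simp [hCmdef, hQdef, h1, h0]
            try split_ifs <;> ring
    · -- other rows
      have hjlt : (j : ℕ) < n - 1 := by omega
      have hmodeq : ((j : ℕ) + 1) % n = (j : ℕ) + 1 := Nat.mod_eq_of_lt (by omega)
      rw [Finset.sum_eq_single (⟨(j : ℕ), hjlt⟩ : Fin (n - 1))]
      · have : Q j ⟨(j : ℕ), hjlt⟩ = 1 := by simp [hQdef, hj]
        rw [this, one_mul]
        simp only [hCmdef, hQdef, Matrix.of_apply, hmodeq, PhiA]
        split_ifs <;> first | rfl | omega | (exfalso; omega)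
      · intro l _ hl
        have : ¬ ((l : ℕ) = (j : ℕ)) := fun h => hl (by simp [Fin.ext_iff, h])
        simp [hQdef, hj, this]
      · simp
  have hQpow : ∀ k : ℕ, Q * PhiA n ^ k = Cm ^ k * Q := by
    intro k
    induction k with
    | zero => simp
    | succ k ih =>
      rw [pow_succ, pow_succ]
      rw [← Matrix.mul_assoc, ih, Matrix.mul_assoc, hQPhi, ← Matrix.mul_assoc]
  have hCk : ∀ k : ℕ, Cm ^ k = Matrix.of (fun j m : Fin n => if (m : ℕ) = ((j : ℕ) + k) % n then 1 else 0) := by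
    intro k
    induction k with
    | zero =>
      ext j m
      simp [Matrix.one_apply, Fin.ext_iff, Nat.mod_eq_of_lt j.isLt, eq_comm]
    | succ k ih =>
      rw [pow_succ, ih]
      ext j m
      rw [Matrix.mul_apply]
      have hmod : ((j : ℕ) + k) % n < n := Nat.mod_lt _ hnpos
      rw [Finset.sum_eq_single (⟨((j : ℕ) + k) % n, hmod⟩ : Fin n)]
      · have : ((((j : ℕ) + k) % n) + 1) % n = ((j : ℕ) + (k + 1)) % n := by
          conv_rhs => rw [← Nat.add_assoc, ← Nat.mod_add_mod]
        simp [hCmdef, this]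
      · intro l _ hl
        have : ¬ ((l : ℕ) = ((j : ℕ) + k) % n) := fun h => hl (by simp [Fin.ext_iff, h])
        simp [this]
      · simp
  have hCn : Cm ^ n = 1 := by
    rw [hCk n]
    ext j m
    have : ((j : ℕ) + n) % n = (j : ℕ) := by
      rw [Nat.add_mod_right, Nat.mod_eq_of_lt j.isLt]
    simp [Matrix.one_apply, Fin.ext_iff, Nat.mod_eq_of_lt j.isLt, eq_comm]
  calc PhiA n ^ n = (L * Q) * PhiA n ^ n := by rw [hLQ, Matrix.one_mul]
    _ = L * (Q * PhiA n ^ n) := by rw [Matrix.mul_assoc]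
    _ = L * (Cm ^ n * Q) := by rw [hQpow]
    _ = L * Q := by rw [hCn, Matrix.one_mul]
    _ = 1 := hLQ

lemma piMat_mul {s : ℕ} (n : Fin s → ℕ)
    (M N : ∀ i : Fin s, Matrix (Fin (n i - 1)) (Fin (n i - 1)) ℤ) :
    (Matrix.of fun x y : (i : Fin s) → Fin (n i - 1) => ∏ i, M i (x i) (y i)) *
      (Matrix.of fun x y : (i : Fin s) → Fin (n i - 1) => ∏ i, N i (x i) (y i)) =
    Matrix.of fun x y : (i : Fin s) → Fin (n i - 1) => ∏ i, (M i * N i) (x i) (y i) := by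
  ext x y
  rw [Matrix.mul_apply]
  simp only [Matrix.of_apply]
  have : ∀ i : Fin s, (M i * N i) (x i) (y i) = ∑ w : Fin (n i - 1), M i (x i) w * N i w (y i) :=
    fun i => Matrix.mul_apply
  rw [Finset.prod_congr rfl fun i _ => this i, Fintype.prod_sum]
  exact Finset.sum_congr rfl fun z _ => (Finset.prod_mul_distrib).symm

lemma piMat_one {s : ℕ} (n : Fin s → ℕ) :
    (Matrix.of fun x y : (i : Fin s) → Fin (n i - 1) =>
        ∏ i, (1 : Matrix (Fin (n i - 1)) (Fin (n i - 1)) ℤ) (x i) (y i)) = 1 := by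
  ext x y
  rw [Matrix.of_apply]
  by_cases h : x = y
  · subst h
    simp [Matrix.one_apply]
  · obtain ⟨i, hi⟩ := Function.ne_iff.mp h
    have h1 : (1 : Matrix (Fin (n i - 1)) (Fin (n i - 1)) ℤ) (x i) (y i) = 0 :=
      Matrix.one_apply_ne hi
    rw [Finset.prod_eq_zero (Finset.mem_univ i) h1, Matrix.one_apply_ne h]

lemma phiProd_pow {s : ℕ} (n : Fin s → ℕ) (k : ℕ) :
    PhiProd n ^ k =
      Matrix.of fun x y : (i : Fin s) → Fin (n i - 1) => ∏ i, (PhiA (n i) ^ k) (x i) (y i) := by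
  induction k with
  | zero => simp only [pow_zero]; exact (piMat_one n).symm
  | succ k ih =>
    rw [pow_succ, ih]
    have : (PhiProd n) =
        Matrix.of fun x y : (i : Fin s) → Fin (n i - 1) => ∏ i, PhiA (n i) (x i) (y i) := rfl
    rw [this, piMat_mul]
    simp only [pow_succ]

lemma phiProd_pow_card {s : ℕ} (n : Fin s → ℕ) (hn : ∀ i, 2 ≤ n i) :
    PhiProd n ^ (∏ i, n i) = 1 := by
  rw [phiProd_pow]
  have h1 : ∀ i : Fin s, PhiA (n i) ^ (∏ j, n j) = 1 := by
    intro i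
    obtain ⟨c, hc⟩ := Finset.dvd_prod_of_mem n (Finset.mem_univ i)
    rw [hc, pow_mul, phiA_pow_self (n i) (hn i), one_pow]
  calc (Matrix.of fun x y : (i : Fin s) → Fin (n i - 1) => ∏ i, (PhiA (n i) ^ (∏ j, n j)) (x i) (y i))
      = Matrix.of fun x y : (i : Fin s) → Fin (n i - 1) =>
          ∏ i, (1 : Matrix (Fin (n i - 1)) (Fin (n i - 1)) ℤ) (x i) (y i) := by
        ext x y
        simp only [Matrix.of_apply]
        exact Finset.prod_congr rfl fun i _ => by rw [h1 i]
    _ = 1 := piMat_one n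

lemma charpoly_eval_eq_zero_imp {m : Type*} [Fintype m] [DecidableEq m]
    (A : Matrix m m ℂ) {lam : ℂ} (h : A.charpoly.eval lam = 0) :
    ∃ v : m → ℂ, v ≠ 0 ∧ A.mulVec v = lam • v := by
  have hsc : Matrix.scalar m lam = lam • (1 : Matrix m m ℂ) := by
    ext i j
    by_cases hij : i = j <;>
      simp [Matrix.scalar_apply, Matrix.one_apply, Matrix.smul_apply, hij,
        Matrix.diagonal_apply]
  have hdet : (Matrix.scalar m lam - A).det = 0 := by
    have h1 : (evalRingHom lam) (Matrix.charpoly A) = 0 := h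
    rw [Matrix.charpoly, RingHom.map_det] at h1
    rw [← h1]
    congr 1
    ext i j
    by_cases hij : i = j
    · subst hij
      simp [Matrix.charmatrix_apply_eq, Matrix.scalar_apply, Matrix.diagonal_apply_eq,
        RingHom.mapMatrix_apply]
    · simp [Matrix.charmatrix_apply_ne _ _ _ hij, Matrix.scalar_apply,
        Matrix.diagonal_apply_ne _ hij, Matrix.sub_apply, RingHom.mapMatrix_apply]
  obtain ⟨v, hv, hmv⟩ := Matrix.exists_mulVec_eq_zero_iff.mpr hdet
  refine ⟨v, hv, ?_⟩
  rw [Matrix.sub_mulVec, hsc, Matrix.smul_mulVec, Matrix.one_mulVec,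
    sub_eq_zero] at hmv
  exact hmv.symm

lemma root_pow_eq_one {s : ℕ} (n : Fin s → ℕ) (hn : ∀ i, 2 ≤ n i) (lam : ℂ)
    (h : (((Chi n).map (Int.castRingHom ℂ)).eval lam) = 0) : lam ^ (∏ i, n i) = 1 := by
  classical
  set f := Int.castRingHom ℂ
  set A := (PhiProd n).map f with hAdef
  have hch : A.charpoly = (Chi n).map f := Matrix.charpoly_map (PhiProd n) f
  obtain ⟨v, hv, hmv⟩ := charpoly_eval_eq_zero_imp A (by rw [hch]; exact h)
  have hpow : ∀ k : ℕ, (A ^ k).mulVec v = lam ^ k • v := by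
    intro k
    induction k with
    | zero => simp
    | succ k ih =>
      rw [pow_succ, ← Matrix.mulVec_mulVec, hmv, Matrix.mulVec_smul, ih, pow_succ,
        smul_smul, mul_comm]
  have hAN : A ^ (∏ i, n i) = 1 := by
    have : A = f.mapMatrix (PhiProd n) := rfl
    rw [this, ← map_pow, phiProd_pow_card n hn, _root_.map_one]
  have := hpow (∏ i, n i)
  rw [hAN, Matrix.one_mulVec] at this
  obtain ⟨j, hj⟩ := Function.ne_iff.mp hv
  have := congrFun this j
  have h2 : (1 - lam ^ (∏ i, n i)) * v j = 0 := by
    simp only [Pi.smul_apply, smul_eq_mul] at this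
    rw [sub_mul, one_mul]
    nth_rewrite 1 [this]
    exact sub_self _
  rcases mul_eq_zero.mp h2 with h3 | h3
  · have := sub_eq_zero.mp h3
    exact this.symm
  · exact absurd h3 hj

lemma reverse_one' : (1 : ℂ[X]).reverse = 1 := by
  rw [← Polynomial.C_1, Polynomial.reverse_C]

lemma reverse_X_sub_C' (a : ℂ) : (X - C a).reverse = 1 - C a * X := by
  unfold Polynomial.reverse
  rw [natDegree_X_sub_C, Polynomial.reflect_sub]
  have h1 : Polynomial.reflect 1 (X : ℂ[X]) = 1 := by
    have := Polynomial.reflect_monomial 1 1 (R := ℂ)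
    simpa using this
  have h2 : Polynomial.reflect 1 (C a) = C a * X := by
    have := Polynomial.reflect_C_mul_X_pow 1 0 (c := a) (R := ℂ)
    simpa using this
  rw [h1, h2]

lemma reverse_pow_dom (f : ℂ[X]) (k : ℕ) : (f ^ k).reverse = f.reverse ^ k := by
  induction k with
  | zero => simpa using reverse_one'
  | succ k ih => rw [pow_succ, Polynomial.reverse_mul_of_domain, ih, pow_succ]

lemma reverse_multiset_prod (M : Multiset ℂ) :
    ((M.map fun a => X - C a).prod).reverse = (M.map fun a => 1 - C a * X).prod := by
  induction M using Multiset.induction with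
  | empty => simpa using reverse_one'
  | cons a M ih =>
    rw [Multiset.map_cons, Multiset.map_cons, Multiset.prod_cons, Multiset.prod_cons,
      Polynomial.reverse_mul_of_domain, ih, reverse_X_sub_C']

lemma reverse_eval_one' (p : ℂ[X]) : p.reverse.eval 1 = p.eval 1 := by
  haveI : Invertible (1 : ℂ) := invertibleOne
  have h : p.reverse.eval (⅟(1 : ℂ)) * 1 ^ p.natDegree = p.eval 1 :=
    Polynomial.eval₂_reverse_mul_pow (RingHom.id ℂ) (1 : ℂ) p
  rw [invOf_one, one_pow, mul_one] at h
  exact h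

lemma F_reverse_eq {s : ℕ} (hs : 0 < s) (n : Fin s → ℕ) (hn : ∀ i, 2 ≤ n i) :
    ((Chi n).map (Int.castRingHom ℂ)).reverse =
      C ((((Chi n).map (Int.castRingHom ℂ)).roots.map fun a => -a).prod) *
        ((Chi n).map (Int.castRingHom ℂ)) := by
  classical
  set f := Int.castRingHom ℂ
  set F := (Chi n).map f with hFdef
  have hmon : (Chi n).Monic := Matrix.charpoly_monic _
  have hFmon : F.Monic := hmon.map f
  have hF0 : F ≠ 0 := hFmon.ne_zero
  have hNpos : 0 < ∏ i, n i := Finset.prod_pos fun i _ => by have := hn i; omega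
  have hsplits : F.Splits := IsAlgClosed.splits F
  have hFroots : F = (F.roots.map fun a => X - C a).prod :=
    hsplits.eq_prod_roots_of_monic hFmon
  have hconj : ∀ a ∈ F.roots, a * (starRingEnd ℂ) a = 1 := by
    intro a ha
    have hroot : F.eval a = 0 := by
      have := Polynomial.isRoot_of_mem_roots ha
      exact this
    have hN : a ^ (∏ i, n i) = 1 := root_pow_eq_one n hn a hroot
    have hnn : ‖a‖₊ ^ (∏ i, n i) = 1 := by
      rw [← nnnorm_pow, hN, nnnorm_one]
    have habs : ‖a‖₊ = 1 := (pow_eq_one_iff_of_nonneg (by positivity) hNpos.ne').mp hnn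
    have : Complex.normSq a = 1 := by
      rw [Complex.normSq_eq_norm_sq, ← coe_nnnorm, habs]
      norm_num
    rw [Complex.mul_conj, this]
    norm_num
  have hmapconj : F.map (starRingEnd ℂ) = F := by
    rw [hFdef, Polynomial.map_map]
    congr 1
    exact Subsingleton.elim _ _
  have step1 : F.reverse = (F.roots.map fun a => 1 - C a * X).prod := by
    conv_lhs => rw [hFroots]
    exact reverse_multiset_prod F.roots
  have step2 : (F.roots.map fun a => 1 - C a * X).prod =
      (F.roots.map fun a => C (-a) * (X - C ((starRingEnd ℂ) a))).prod := by
    apply congrArg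
    apply Multiset.map_congr rfl
    intro a ha
    have h := hconj a ha
    have h2 : (-a) * ((starRingEnd ℂ) a) = -1 := by rw [neg_mul, h]
    calc (1 : ℂ[X]) - C a * X = C (-a) * X - C ((-a) * (starRingEnd ℂ) a) := by
          rw [h2]
          simp [C_neg]
          ring
      _ = C (-a) * (X - C ((starRingEnd ℂ) a)) := by rw [mul_sub, C_mul]
  have step3 : (F.roots.map fun a => C (-a) * (X - C ((starRingEnd ℂ) a))).prod =
      C ((F.roots.map fun a => -a).prod) * (F.roots.map fun a => X - C ((starRingEnd ℂ) a)).prod := by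
    rw [Multiset.prod_map_mul]
    congr 1
    have hmp : (Polynomial.C ((F.roots.map fun a => -a).prod) : ℂ[X])
        = ((F.roots.map fun a => -a).map (fun z => Polynomial.C z)).prod :=
      map_multiset_prod Polynomial.C _
    rw [hmp, Multiset.map_map]
    simp [Function.comp]
  have step4 : (F.roots.map fun a => X - C ((starRingEnd ℂ) a)).prod = F := by
    have : (F.roots.map fun a => X - C ((starRingEnd ℂ) a)).prod
        = ((F.roots.map fun a => X - C a).prod).map (starRingEnd ℂ) := by
      rw [Polynomial.map_multiset_prod, Multiset.map_map]
      apply congrArg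
      apply Multiset.map_congr rfl
      intro a _
      simp
    rw [this, ← hFroots, hmapconj]
  rw [step1, step2, step3, step4]


theorem chi_reverse_eq {s : ℕ} (hs : 0 < s) (n : Fin s → ℕ) (hn : ∀ i, 2 ≤ n i) :
    (Chi n).reverse =
      (-1) ^ (Polynomial.rootMultiplicity (1 : ℂ)
        ((Chi n).map (Int.castRingHom ℂ))) * Chi n ∧
    ((Chi n).reverse = Chi n ↔
      Even (Polynomial.rootMultiplicity (1 : ℂ)
        ((Chi n).map (Int.castRingHom ℂ)))) := by
  classical
  set f := Int.castRingHom ℂ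
  set F := (Chi n).map f with hFdef
  set m := Polynomial.rootMultiplicity (1 : ℂ) F with hmdef
  have hmon : (Chi n).Monic := Matrix.charpoly_monic _
  have hFmon : F.Monic := hmon.map f
  have hF0 : F ≠ 0 := hFmon.ne_zero
  -- Step A: F.reverse = C c * F
  obtain ⟨c, hc⟩ : ∃ c : ℂ, F.reverse = C c * F := ⟨_, F_reverse_eq hs n hn⟩
  -- Step B: c = (-1)^m
  set G := F /ₘ (X - C (1 : ℂ)) ^ m with hGdef
  have hFG : (X - C (1 : ℂ)) ^ m * G = F :=
    Polynomial.pow_mul_divByMonic_rootMultiplicity_eq F 1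
  have hG1 : G.eval 1 ≠ 0 :=
    Polynomial.eval_divByMonic_pow_rootMultiplicity_ne_zero 1 hF0
  have hrevXC : (X - C (1 : ℂ)).reverse = -(X - C 1) := by
    rw [reverse_X_sub_C']
    simp
  have hrevF : F.reverse = (-1) ^ m * ((X - C (1 : ℂ)) ^ m * G.reverse) := by
    conv_lhs => rw [← hFG]
    rw [Polynomial.reverse_mul_of_domain, reverse_pow_dom, hrevXC, neg_pow]
    ring
  have hkey : (X - C (1 : ℂ)) ^ m * (C c * G) = (X - C (1 : ℂ)) ^ m * ((-1) ^ m * G.reverse) := by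
    have h1 : (X - C (1 : ℂ)) ^ m * (C c * G) = C c * F := by rw [← hFG]; ring
    rw [h1, ← hc, hrevF]
    ring
  have hcancel : C c * G = (-1 : ℂ[X]) ^ m * G.reverse :=
    mul_left_cancel₀ (pow_ne_zero m (Polynomial.X_sub_C_ne_zero 1)) hkey
  have heval := congrArg (Polynomial.eval (1 : ℂ)) hcancel
  rw [Polynomial.eval_mul, Polynomial.eval_mul, Polynomial.eval_C, Polynomial.eval_pow,
    Polynomial.eval_neg, Polynomial.eval_one, reverse_eval_one'] at heval
  have hcval : c = (-1 : ℂ) ^ m := mul_right_cancel₀ hG1 heval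
  have hrevC : F.reverse = (-1 : ℂ[X]) ^ m * F := by
    rw [hc, hcval]
    congr 1
    rw [map_pow, map_neg, Polynomial.C_1]
  -- Step C: descend to ℤ
  have hinj : Function.Injective (f : ℤ → ℂ) := fun a b h => by
    have : ((a : ℤ) : ℂ) = ((b : ℤ) : ℂ) := h
    exact_mod_cast this
  have hdeg : F.natDegree = (Chi n).natDegree := hmon.natDegree_map f
  have hrevmap : ((Chi n).reverse).map f = F.reverse := by
    unfold Polynomial.reverse
    rw [Polynomial.reflect_map, hdeg]
  have goal1 : (Chi n).reverse = (-1) ^ m * Chi n := by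
    apply Polynomial.map_injective f hinj
    rw [hrevmap, hrevC, Polynomial.map_mul, Polynomial.map_pow, Polynomial.map_neg,
      Polynomial.map_one]
  refine ⟨goal1, ?_, ?_⟩
  · intro h
    by_contra hodd
    have hodd' : Odd m := Nat.odd_iff.mpr (Nat.not_even_iff.mp hodd)
    rw [goal1, hodd'.neg_one_pow] at h
    have hlc := congrArg Polynomial.leadingCoeff h
    rw [neg_one_mul, Polynomial.leadingCoeff_neg, hmon.leadingCoeff] at hlc
    norm_num at hlc
  · intro h
    rw [goal1, h.neg_one_pow, one_mul]
end
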